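/- arXiv:1308.4534 — 2 statements merged into one kernel-verified Lean document; each statement's English description precedes it below -/
import Mathlib

section
/- Let I be an HR instance and let J be its IP model. Then the map sending a matching M of I to the 0–1 vector x(M), defined by x_{i,p} = 1 if and only if resident r_i is assigned in M to pref(r_i,p) (for 1 ≤ p ≤ l(r_i)) and x_{i,l(r_i)+1} = 1 if and only if r_i is unassigned in M, is a bijection between the set of stable matchings of I and the set of 0–1 assignments satisfying all constraints of J. -/
open Classical

/-- `x` precedes `y` on the strict preference list `l`. -/
def Prefers {α : Type} [DecidableEq α] (l : List α) (x y : α) : Prop :=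
  x ∈ l ∧ y ∈ l ∧ l.idxOf x < l.idxOf y

/-- An HR instance: each hospital `h` has capacity `cap h`, each resident a strict
preference list `rpref r` over a subset of the hospitals, and each hospital a strict
preference list `hpref h` over exactly those residents that list it. -/
structure HRInst (R H : Type) where
  cap : H → ℕ
  rpref : R → List H
  hpref : H → List R

namespace HRInst

variable {R H : Type} [Fintype R] [DecidableEq R] [DecidableEq H]

/-- The set of residents assigned to hospital `h` in `M`. -/
def assignees (M : R → Option H) (h : H) : Finset R :=
  Finset.univ.filter fun r => M r = some h

/-- `M` is a matching of the HR instance `I`. -/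
def IsMatching (I : HRInst R H) (M : R → Option H) : Prop :=
  (∀ r h, M r = some h → h ∈ I.rpref r) ∧
  (∀ h, (assignees M h).card ≤ I.cap h)

/-- `(r,h)` is a blocking pair of `M`. -/
def Blocks (I : HRInst R H) (M : R → Option H) (r : R) (h : H) : Prop :=
  h ∈ I.rpref r ∧ M r ≠ some h ∧
  (M r = none ∨ ∃ h', M r = some h' ∧ Prefers (I.rpref r) h h') ∧
  ((assignees M h).card < I.cap h ∨ ∃ r' ∈ assignees M h, Prefers (I.hpref h) r r')

/-- `M` is a stable matching of the HR instance `I`. -/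
def Stable (I : HRInst R H) (M : R → Option H) : Prop :=
  I.IsMatching M ∧ ∀ r h, ¬ I.Blocks M r h

/-- The type of 0–1 assignments to the variables `x_{i,p}` of the IP model: one
variable for each resident `r` and each position `p` of its preference list,
together with the extra position `l(r)+1` meaning "unassigned". -/
def IPVars (I : HRInst R H) : Type :=
  ∀ r : R, Fin ((I.rpref r).length + 1) → Bool

/-- Feasibility of a 0–1 assignment for the IP model `J` of the HR instance `I`:
(a) each resident is assigned exactly one position; (b) each hospital `h` receives at
most `cap h` residents; (c) the stability constraints
`c_j · Σ_{p'>p} x_{i,p'} ≤ Σ_{(i',p'') : pref(r_{i'},p'') = h_j, rank < rank(h_j,r_i)} x_{i',p''}`. -/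
def Feasible (I : HRInst R H) (x : IPVars I) : Prop :=
  (∀ r : R, (∑ p, if x r p then 1 else 0) = 1) ∧
  (∀ h : H,
    (∑ r : R, ∑ p : Fin ((I.rpref r).length + 1),
      if (I.rpref r)[p.val]? = some h ∧ x r p then 1 else 0) ≤ I.cap h) ∧
  (∀ r : R, ∀ p : Fin ((I.rpref r).length + 1), ∀ h : H,
    (I.rpref r)[p.val]? = some h →
    I.cap h * (∑ p' : Fin ((I.rpref r).length + 1), if p.val < p'.val ∧ x r p' then 1 else 0) ≤
      ∑ r' : R, ∑ p'' : Fin ((I.rpref r').length + 1),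
        if (I.rpref r')[p''.val]? = some h ∧
            (I.hpref h).idxOf r' < (I.hpref h).idxOf r ∧ x r' p'' then 1 else 0)

/-- The 0–1 vector `x(M)` associated with a matching `M`: `x_{i,p} = 1` iff `r_i` is
assigned in `M` to `pref(r_i,p)`, and `x_{i,l(r_i)+1} = 1` iff `r_i` is unassigned. -/
def xOf (I : HRInst R H) (M : R → Option H) : IPVars I := fun r p =>
  if hp : p.val < (I.rpref r).length
  then decide (M r = some ((I.rpref r).get ⟨p.val, hp⟩))
  else decide (M r = none)

end HRInst

section Aux

variable {R H : Type} [Fintype R] [DecidableEq R] [DecidableEq H]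

/-- A pre-matching: every assigned hospital appears on the resident's list. -/
def Proper (I : HRInst R H) (M : R → Option H) : Prop :=
  ∀ r h, M r = some h → h ∈ I.rpref r

/-- The position of `r`'s assignment on its list (`length` = unassigned). -/
def mpos (I : HRInst R H) (M : R → Option H) (r : R) : Fin ((I.rpref r).length + 1) :=
  ⟨(M r).elim (I.rpref r).length (fun h => (I.rpref r).idxOf h), by
    cases M r with
    | none => simp
    | some h => exact Nat.lt_succ_of_le List.idxOf_le_length⟩

lemma mpos_val (I : HRInst R H) (M : R → Option H) (r : R) :
    (mpos I M r).val = (M r).elim (I.rpref r).length (fun h => (I.rpref r).idxOf h) := rfl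

lemma indexOf_get_of_nodup {α : Type} [DecidableEq α] {l : List α} (hnd : l.Nodup)
    (i : Fin l.length) : l.idxOf (l.get i) = i.val := by
  have hm : l.get i ∈ l := l.get_mem i
  have hlt : l.idxOf (l.get i) < l.length := List.idxOf_lt_length_iff.mpr hm
  have hg : l.get ⟨l.idxOf (l.get i), hlt⟩ = l.get i := List.idxOf_get hlt
  have := (hnd.get_inj_iff).mp hg
  exact congrArg Fin.val this

lemma xOf_eq_iff (I : HRInst R H) {M : R → Option H} (hnd : ∀ r, (I.rpref r).Nodup)
    (hM : Proper I M) (r : R) (p : Fin ((I.rpref r).length + 1)) :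
    I.xOf M r p = true ↔ p = mpos I M r := by
  rw [Fin.ext_iff, mpos_val]
  unfold HRInst.xOf
  cases hMr : M r with
  | none =>
    by_cases hp : p.val < (I.rpref r).length
    · simp [hp]; omega
    · have hpe : p.val = (I.rpref r).length := by omega
      simp [hp, hpe]
  | some h =>
    have hmem : h ∈ I.rpref r := hM r h hMr
    have hidx : (I.rpref r).idxOf h < (I.rpref r).length := List.idxOf_lt_length_iff.mpr hmem
    by_cases hp : p.val < (I.rpref r).length
    · simp only [dif_pos hp, decide_eq_true_eq, Option.some.injEq, Option.elim]
      constructor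
      · intro hg
        have : (I.rpref r).idxOf ((I.rpref r).get ⟨p.val, hp⟩) = p.val :=
          indexOf_get_of_nodup (hnd r) _
        rw [← hg] at this
        omega
      · intro hpe
        have : (⟨p.val, hp⟩ : Fin (I.rpref r).length) = ⟨(I.rpref r).idxOf h, hidx⟩ :=
          Fin.ext hpe
        rw [this, List.idxOf_get hidx]
    · simp only [dif_neg hp, decide_eq_true_eq, Option.elim]
      constructor
      · intro hcon; exact absurd hcon (by simp)
      · intro hpe; omega

lemma get?_mpos (I : HRInst R H) {M : R → Option H} (hM : Proper I M) (r : R) :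
    (I.rpref r)[(mpos I M r).val]? = M r := by
  rw [mpos_val]
  cases hMr : M r with
  | none => simp
  | some h =>
    have hmem : h ∈ I.rpref r := hM r h hMr
    have hidx : (I.rpref r).idxOf h < (I.rpref r).length := List.idxOf_lt_length_iff.mpr hmem
    simp only [Option.elim]
    rw [List.getElem?_eq_getElem hidx, List.getElem_idxOf hidx]

lemma sum_eq_one_of {n : ℕ} (b : Fin n → Bool) (q : Fin n) (hb : ∀ p, b p = true ↔ p = q) :
    (∑ p, if b p then 1 else 0) = 1 := by
  rw [Finset.sum_eq_single q]
  · simp [hb]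
  · intro p _ hne; simp [hb, hne]
  · simp

lemma sum_indicator_eq {n : ℕ} (b : Fin n → Bool) (q : Fin n) (hb : ∀ p, b p = true ↔ p = q)
    (P : Fin n → Prop) [DecidablePred P] :
    (∑ p, if P p ∧ b p then 1 else 0) = if P q then 1 else 0 := by
  rw [Finset.sum_eq_single q]
  · simp [hb]
  · intro p _ hne; simp [hb, hne]
  · simp

lemma exists_pos_of_sum_one {n : ℕ} (b : Fin n → Bool)
    (h : (∑ p, if b p then 1 else 0) = 1) : ∃ q, ∀ p, b p = true ↔ p = q := by
  have hc : (Finset.univ.filter (fun p => b p = true)).card = 1 := by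
    rw [Finset.card_filter]; exact h
  obtain ⟨q, hq⟩ := Finset.card_eq_one.mp hc
  refine ⟨q, fun p => ?_⟩
  constructor
  · intro hp
    have : p ∈ Finset.univ.filter (fun p => b p = true) := by simp [hp]
    rw [hq] at this; simpa using this
  · rintro rfl
    by_contra hfalse
    have hmem : p ∉ Finset.univ.filter (fun x => b x = true) := by simp [hfalse]
    rw [hq] at hmem; simp at hmem

lemma sum_xOf_hospital (I : HRInst R H) {M : R → Option H} (hnd : ∀ r, (I.rpref r).Nodup)
    (hM : Proper I M) (h : H) :
    (∑ r : R, ∑ p : Fin ((I.rpref r).length + 1),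
      if (I.rpref r)[p.val]? = some h ∧ I.xOf M r p then 1 else 0)
      = (HRInst.assignees M h).card := by
  rw [HRInst.assignees, Finset.card_filter]
  refine Finset.sum_congr rfl fun r _ => ?_
  rw [sum_indicator_eq _ (mpos I M r) (xOf_eq_iff I hnd hM r)
    (fun p => (I.rpref r)[p.val]? = some h)]
  simp only [get?_mpos I hM r]

lemma sum_xOf_pref (I : HRInst R H) {M : R → Option H} (hnd : ∀ r, (I.rpref r).Nodup)
    (hM : Proper I M) (h : H) (r : R) :
    (∑ r' : R, ∑ p'' : Fin ((I.rpref r').length + 1),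
      if (I.rpref r')[p''.val]? = some h ∧
          (I.hpref h).idxOf r' < (I.hpref h).idxOf r ∧ I.xOf M r' p'' then 1 else 0)
    = ((HRInst.assignees M h).filter
        (fun r' => (I.hpref h).idxOf r' < (I.hpref h).idxOf r)).card := by
  rw [HRInst.assignees, Finset.filter_filter, Finset.card_filter]
  refine Finset.sum_congr rfl fun r' _ => ?_
  have hstep : (∑ p'' : Fin ((I.rpref r').length + 1),
      if (I.rpref r')[p''.val]? = some h ∧
          (I.hpref h).idxOf r' < (I.hpref h).idxOf r ∧ I.xOf M r' p'' then 1 else 0)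
      = (∑ p'' : Fin ((I.rpref r').length + 1),
      if ((I.rpref r')[p''.val]? = some h ∧
          (I.hpref h).idxOf r' < (I.hpref h).idxOf r) ∧ I.xOf M r' p'' then 1 else 0) := by
    refine Finset.sum_congr rfl fun p _ => ?_
    simp only [and_assoc]
  rw [hstep, sum_indicator_eq _ (mpos I M r') (xOf_eq_iff I hnd hM r')
    (fun p'' => (I.rpref r')[p''.val]? = some h ∧
      (I.hpref h).idxOf r' < (I.hpref h).idxOf r)]
  simp only [get?_mpos I hM r']

lemma wants_iff (I : HRInst R H) {M : R → Option H} (hM : Proper I M) {r : R} {h : H}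
    (hmem : h ∈ I.rpref r) :
    (I.rpref r).idxOf h < (mpos I M r).val ↔
      (M r ≠ some h ∧ (M r = none ∨ ∃ h', M r = some h' ∧ Prefers (I.rpref r) h h')) := by
  rw [mpos_val]
  cases hMr : M r with
  | none =>
    simp [List.idxOf_lt_length_iff.mpr hmem]
  | some h'' =>
    have hmem'' : h'' ∈ I.rpref r := hM r h'' hMr
    simp only [Option.elim, ne_eq, Option.some.injEq, reduceCtorEq, false_or]
    constructor
    · intro hlt
      have hne : ¬ h'' = h := by
        rintro rfl; omega
      exact ⟨hne, h'', rfl, hmem, hmem'', hlt⟩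
    · rintro ⟨hne, h', he, _, _, hlt⟩
      cases he; exact hlt

lemma M_eq_get?_mpos (I : HRInst R H) {M : R → Option H} (hM : Proper I M) (r : R) :
    M r = (I.rpref r)[(mpos I M r).val]? := (get?_mpos I hM r).symm

lemma feasible_iff_stable (I : HRInst R H)
    (hrnodup : ∀ r, (I.rpref r).Nodup) (hhnodup : ∀ h, (I.hpref h).Nodup)
    (hmutual : ∀ r h, h ∈ I.rpref r ↔ r ∈ I.hpref h)
    {M : R → Option H} (hM : Proper I M) :
    I.Feasible (I.xOf M) ↔ I.Stable M := by
  have hxiff : ∀ r p, I.xOf M r p = true ↔ p = mpos I M r := fun r => xOf_eq_iff I hrnodup hM r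
  have hbsum := sum_xOf_hospital I hrnodup hM
  have hlhs : ∀ r (p : Fin ((I.rpref r).length + 1)),
      (∑ p' : Fin ((I.rpref r).length + 1), if p.val < p'.val ∧ I.xOf M r p' then 1 else 0)
        = if p.val < (mpos I M r).val then 1 else 0 := fun r p =>
    sum_indicator_eq _ (mpos I M r) (hxiff r) (fun p' => p.val < p'.val)
  constructor
  · rintro ⟨_, hb, hc⟩
    refine ⟨⟨hM, fun h => by rw [← hbsum h]; exact hb h⟩, ?_⟩
    rintro r h ⟨hmem, hne, hpref, hblk⟩
    have hidx : (I.rpref r).idxOf h < (I.rpref r).length := List.idxOf_lt_length_iff.mpr hmem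
    set p : Fin ((I.rpref r).length + 1) :=
      ⟨(I.rpref r).idxOf h, Nat.lt_succ_of_le List.idxOf_le_length⟩ with hp
    have hget : (I.rpref r)[p.val]? = some h := by
      rw [List.getElem?_eq_getElem hidx, List.getElem_idxOf hidx]
    have hlt : p.val < (mpos I M r).val := (wants_iff I hM hmem).mpr ⟨hne, hpref⟩
    have hkey := hc r p h hget
    rw [hlhs r p, if_pos hlt, mul_one, sum_xOf_pref I hrnodup hM h r] at hkey
    have hsub := Finset.filter_subset
      (fun r' => (I.hpref h).idxOf r' < (I.hpref h).idxOf r) (HRInst.assignees M h)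
    have hcard : (HRInst.assignees M h).card ≤ I.cap h := by
      rw [← hbsum h]; exact hb h
    have heq : ((HRInst.assignees M h).filter
        (fun r' => (I.hpref h).idxOf r' < (I.hpref h).idxOf r)) = HRInst.assignees M h :=
      Finset.eq_of_subset_of_card_le hsub (le_trans hcard hkey)
    rcases hblk with hlt2 | ⟨r', hr', hpr⟩
    · have := le_trans hkey (Finset.card_le_card hsub); omega
    · rw [← heq] at hr'
      have := (Finset.mem_filter.mp hr').2
      exact absurd hpr.2.2 (by omega)
  · rintro ⟨⟨_, hcard⟩, hnb⟩
    refine ⟨fun r => sum_eq_one_of _ (mpos I M r) (hxiff r),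
      fun h => by rw [hbsum h]; exact hcard h, ?_⟩
    intro r p h hget
    rw [hlhs r p, sum_xOf_pref I hrnodup hM h r]
    by_cases hlt : p.val < (mpos I M r).val
    · rw [if_pos hlt, mul_one]
      have hplt : p.val < (I.rpref r).length := by
        by_contra hcon
        rw [List.getElem?_eq_none_iff.mpr (by omega)] at hget
        exact absurd hget (by simp)
      have hmem : h ∈ I.rpref r := List.mem_of_getElem? hget
      have hpidx : p.val = (I.rpref r).idxOf h := by
        rw [List.getElem?_eq_getElem hplt] at hget
        have hig := indexOf_get_of_nodup (hrnodup r) ⟨p.val, hplt⟩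
        have hgh : (I.rpref r).get ⟨p.val, hplt⟩ = h := Option.some.inj hget
        rw [hgh] at hig
        simp only [Fin.val_mk] at hig
        omega
      have hw := (wants_iff I hM hmem).mp (by omega)
      have h4 : ¬((HRInst.assignees M h).card < I.cap h ∨
          ∃ r' ∈ HRInst.assignees M h, Prefers (I.hpref h) r r') := by
        intro hcon; exact hnb r h ⟨hmem, hw.1, hw.2, hcon⟩
      push_neg at h4
      obtain ⟨h41, h42⟩ := h4
      have hall : ∀ r' ∈ HRInst.assignees M h,
          (I.hpref h).idxOf r' < (I.hpref h).idxOf r := by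
        intro r' hr'
        have hr'h : M r' = some h := by
          simpa [HRInst.assignees] using hr'
        have hr'mem : r' ∈ I.hpref h := (hmutual r' h).mp (hM r' h hr'h)
        have hrmem : r ∈ I.hpref h := (hmutual r h).mp hmem
        have hnp := h42 r' hr'
        have hne' : r' ≠ r := by rintro rfl; exact hw.1 hr'h
        by_contra hle
        push_neg at hle
        rcases lt_or_eq_of_le hle with h' | h'
        · exact hnp ⟨hrmem, hr'mem, h'⟩
        · exact hne' ((List.idxOf_inj hr'mem).mp h'.symm)
      rw [Finset.filter_eq_self.mpr hall]
      exact h41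
    · rw [if_neg hlt, mul_zero]
      exact Nat.zero_le _

end Aux

/-- The map `M ↦ x(M)` is a bijection between the set of stable matchings of the HR
instance `I` and the set of 0–1 assignments satisfying all constraints of its IP
model `J`. -/
theorem stable_matchings_biject_feasible_solutions {R H : Type}
    [Fintype R] [DecidableEq R] [DecidableEq H] (I : HRInst R H)
    (hcap : ∀ h, 1 ≤ I.cap h)
    (hrnodup : ∀ r, (I.rpref r).Nodup) (hhnodup : ∀ h, (I.hpref h).Nodup)
    (hmutual : ∀ r h, h ∈ I.rpref r ↔ r ∈ I.hpref h) :
    Set.BijOn (I.xOf) {M | I.Stable M} {x | I.Feasible x} := by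
  refine ⟨?_, ?_, ?_⟩
  · intro M hM
    exact (feasible_iff_stable I hrnodup hhnodup hmutual hM.1.1).mpr hM
  · intro M1 h1 M2 h2 hx
    funext r
    have hmpos : mpos I M1 r = mpos I M2 r := by
      have h1x := (xOf_eq_iff I hrnodup h1.1.1 r (mpos I M1 r)).mpr rfl
      rw [show I.xOf M1 = I.xOf M2 from hx] at h1x
      exact (xOf_eq_iff I hrnodup h2.1.1 r (mpos I M1 r)).mp h1x
    rw [M_eq_get?_mpos I h1.1.1 r, M_eq_get?_mpos I h2.1.1 r, hmpos]
  · intro x hx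
    obtain ⟨ha, hb, hc⟩ := hx
    choose q hq using fun r => exists_pos_of_sum_one _ (ha r)
    set M : R → Option H := fun r => (I.rpref r)[(q r).val]? with hMdef
    have hprop : Proper I M := fun r h hrh => List.mem_of_getElem? hrh
    have hmq : ∀ r, mpos I M r = q r := by
      intro r
      by_cases hlt : (q r).val < (I.rpref r).length
      · have hMr : M r = some ((I.rpref r).get ⟨(q r).val, hlt⟩) := by
          simp only [hMdef]; exact List.getElem?_eq_getElem hlt
        apply Fin.ext
        rw [mpos_val, hMr]
        simpa using indexOf_get_of_nodup (hrnodup r) ⟨(q r).val, hlt⟩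
      · have hqe : (q r).val = (I.rpref r).length := by omega
        have hMr : M r = none := by
          simp only [hMdef]; exact List.getElem?_eq_none_iff.mpr (by omega)
        apply Fin.ext
        rw [mpos_val, hMr]
        simpa using hqe.symm
    have hxM : I.xOf M = x := by
      funext r p
      rw [Bool.eq_iff_iff, xOf_eq_iff I hrnodup hprop r p, hmq r]
      exact (hq r p).symm
    refine ⟨M, ?_, hxM⟩
    have hfeas : I.Feasible (I.xOf M) := by rw [hxM]; exact ⟨ha, hb, hc⟩
    exact (feasible_iff_stable I hrnodup hhnodup hmutual hprop).mp hfeas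
end

section
/- Let I be a (many-to-one) HRC instance and let I' be the one-to-one HRC instance obtained from I by the cloning construction. Then I admits an MM-stable matching if and only if I' admits an MM-stable matching. -/
/-- A (many-to-one) HRC instance: hospitals with capacities, residents partitioned
into single residents and ordered couples, with strict preference lists. -/
structure HRCInst (R H : Type) where
  cap : H → ℕ
  singles : List R
  couples : List (R × R)
  singlePref : R → List H
  couplePref : R × R → List (H × H)
  hospPref : H → List R

namespace HRCInst

variable {R H : Type} [Fintype R] [DecidableEq R] [DecidableEq H]

/-- The set of residents assigned to hospital `h` in `M`. -/
def assignees (M : R → Option H) (h : H) : Finset R :=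
  Finset.univ.filter fun r => M r = some h

/-- `M` is a matching of the instance `I`. -/
def IsMatching (I : HRCInst R H) (M : R → Option H) : Prop :=
  (∀ r ∈ I.singles, ∀ h, M r = some h → h ∈ I.singlePref r) ∧
  (∀ c ∈ I.couples,
    (M c.1 = none ∧ M c.2 = none) ∨
    ∃ hp ∈ I.couplePref c, M c.1 = some hp.1 ∧ M c.2 = some hp.2) ∧
  (∀ h, (assignees M h).card ≤ I.cap h) ∧
  (∀ r, (M r).isSome → r ∈ I.singles ∨ ∃ c ∈ I.couples, r = c.1 ∨ r = c.2)

/-- Hospital `h` is under-subscribed in `M`. -/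
def UnderSub (I : HRCInst R H) (M : R → Option H) (h : H) : Prop :=
  (assignees M h).card < I.cap h

/-- Hospital `h` prefers `r` to `r'`. -/
def HPrefers (I : HRCInst R H) (h : H) (r r' : R) : Prop :=
  Prefers (I.hospPref h) r r'

/-- MM-blocking configuration of type (1): a single resident and a hospital. -/
def MMBlock1 (I : HRCInst R H) (M : R → Option H) : Prop :=
  ∃ r ∈ I.singles, ∃ h ∈ I.singlePref r,
    (M r = none ∨ ∃ h', M r = some h' ∧ Prefers (I.singlePref r) h h') ∧
    (I.UnderSub M h ∨ ∃ r' ∈ assignees M h, I.HPrefers h r r')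

/-- MM-blocking configuration of type (2): a couple and a hospital, one member
keeping its assignment. -/
def MMBlock2 (I : HRCInst R H) (M : R → Option H) : Prop :=
  ∃ c ∈ I.couples, ∃ hi hj, M c.1 = some hi ∧ M c.2 = some hj ∧ ∃ hk,
    ((Prefers (I.couplePref c) (hk, hj) (hi, hj) ∧
       (I.UnderSub M hk ∨ ∃ r' ∈ (assignees M hk).erase c.2, I.HPrefers hk c.1 r')) ∨
     (Prefers (I.couplePref c) (hi, hk) (hi, hj) ∧
       (I.UnderSub M hk ∨ ∃ r' ∈ (assignees M hk).erase c.1, I.HPrefers hk c.2 r')))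

/-- The couple `c` is jointly unassigned in `M`, or jointly prefers the pair `hp`
(on its joint list) to its assigned pair. -/
def CoupleWants (I : HRCInst R H) (M : R → Option H) (c : R × R) (hp : H × H) : Prop :=
  hp ∈ I.couplePref c ∧
  ((M c.1 = none ∧ M c.2 = none) ∨
    ∃ hp' ∈ I.couplePref c, M c.1 = some hp'.1 ∧ M c.2 = some hp'.2 ∧
      Prefers (I.couplePref c) hp hp')

/-- MM-blocking configuration of type (3): a couple and a pair of hospitals. -/
def MMBlock3 (I : HRCInst R H) (M : R → Option H) : Prop :=
  ∃ c ∈ I.couples, ∃ hk hl, M c.1 ≠ some hk ∧ M c.2 ≠ some hl ∧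
    I.CoupleWants M c (hk, hl) ∧
    ((hk ≠ hl ∧
        (I.UnderSub M hk ∨ ∃ r' ∈ assignees M hk, I.HPrefers hk c.1 r') ∧
        (I.UnderSub M hl ∨ ∃ r' ∈ assignees M hl, I.HPrefers hl c.2 r')) ∨
     (hk = hl ∧ (assignees M hk).card + 2 ≤ I.cap hk) ∨
     (hk = hl ∧ (assignees M hk).card + 1 = I.cap hk ∧
        ∃ r' ∈ assignees M hk, (I.HPrefers hk c.1 r' ∨ I.HPrefers hk c.2 r')) ∨
     (hk = hl ∧ (assignees M hk).card = I.cap hk ∧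
        ∃ rs ∈ assignees M hk, ∃ rt ∈ assignees M hk, rs ≠ rt ∧
          I.HPrefers hk c.1 rs ∧ I.HPrefers hk c.2 rt))

/-- `M` is an MM-stable matching of the instance `I`. -/
def MMStable (I : HRCInst R H) (M : R → Option H) : Prop :=
  I.IsMatching M ∧ ¬ I.MMBlock1 M ∧ ¬ I.MMBlock2 M ∧ ¬ I.MMBlock3 M

/-- BIS-blocking configuration of type (2). -/
def BISBlock2 (I : HRCInst R H) (M : R → Option H) : Prop :=
  ∃ c ∈ I.couples, ∃ hi hj, M c.1 = some hi ∧ M c.2 = some hj ∧ ∃ hk,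
    ((Prefers (I.couplePref c) (hk, hj) (hi, hj) ∧
       ((hk ≠ hj ∧ (I.UnderSub M hk ∨ ∃ r' ∈ assignees M hk, I.HPrefers hk c.1 r')) ∨
        (hk = hj ∧ (I.UnderSub M hk ∨ ∃ r' ∈ (assignees M hk).erase c.2,
          I.HPrefers hk c.1 r' ∧ I.HPrefers hk c.2 r')))) ∨
     (Prefers (I.couplePref c) (hi, hk) (hi, hj) ∧
       ((hk ≠ hi ∧ (I.UnderSub M hk ∨ ∃ r' ∈ assignees M hk, I.HPrefers hk c.2 r')) ∨
        (hk = hi ∧ (I.UnderSub M hk ∨ ∃ r' ∈ (assignees M hk).erase c.1,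
          I.HPrefers hk c.1 r' ∧ I.HPrefers hk c.2 r')))))

/-- BIS-blocking configuration of type (3). -/
def BISBlock3 (I : HRCInst R H) (M : R → Option H) : Prop :=
  ∃ c ∈ I.couples, ∃ hk hl, M c.1 ≠ some hk ∧ M c.2 ≠ some hl ∧
    I.CoupleWants M c (hk, hl) ∧
    ((hk ≠ hl ∧
        (I.UnderSub M hk ∨ ∃ r' ∈ assignees M hk, I.HPrefers hk c.1 r') ∧
        (I.UnderSub M hl ∨ ∃ r' ∈ assignees M hl, I.HPrefers hl c.2 r')) ∨
     (hk = hl ∧ (assignees M hk).card + 2 ≤ I.cap hk) ∨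
     (hk = hl ∧ (assignees M hk).card + 1 = I.cap hk ∧
        ∃ r' ∈ assignees M hk, I.HPrefers hk c.1 r' ∧ I.HPrefers hk c.2 r') ∨
     (hk = hl ∧ (assignees M hk).card = I.cap hk ∧
        ((∃ rp ∈ assignees M hk,
            (∃ rq ∈ assignees M hk, (rp, rq) ∈ I.couples ∨ (rq, rp) ∈ I.couples) ∧
            I.HPrefers hk c.1 rp ∧ I.HPrefers hk c.2 rp) ∨
         (∃ u ∈ assignees M hk, ∃ v ∈ assignees M hk, u ≠ v ∧
            (let w := if (I.hospPref hk).idxOf c.1 ≤ (I.hospPref hk).idxOf c.2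
              then c.2 else c.1
             I.HPrefers hk w u ∧ I.HPrefers hk w v)))))

/-- `M` is a BIS-stable matching of the instance `I`. -/
def BISStable (I : HRCInst R H) (M : R → Option H) : Prop :=
  I.IsMatching M ∧ ¬ I.MMBlock1 M ∧ ¬ I.BISBlock2 M ∧ ¬ I.BISBlock3 M

/-- Well-formedness of an HRC instance: positive capacities, strict (duplicate-free)
preference lists, the singles and couples partition the participating residents, and
each hospital's list consists of exactly those residents that list it. -/
def WellFormed (I : HRCInst R H) : Prop :=
  (∀ h, 1 ≤ I.cap h) ∧
  (∀ r, (I.singlePref r).Nodup) ∧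
  (∀ c, (I.couplePref c).Nodup) ∧
  (∀ h, (I.hospPref h).Nodup) ∧
  I.singles.Nodup ∧ I.couples.Nodup ∧
  (∀ c ∈ I.couples, c.1 ≠ c.2) ∧
  (∀ c ∈ I.couples, ∀ c' ∈ I.couples, c ≠ c' →
    c.1 ≠ c'.1 ∧ c.1 ≠ c'.2 ∧ c.2 ≠ c'.1 ∧ c.2 ≠ c'.2) ∧
  (∀ r ∈ I.singles, ∀ c ∈ I.couples, r ≠ c.1 ∧ r ≠ c.2) ∧
  (∀ h r, r ∈ I.hospPref h ↔
    ((r ∈ I.singles ∧ h ∈ I.singlePref r) ∨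
     (∃ c ∈ I.couples,
       (r = c.1 ∧ ∃ hp ∈ I.couplePref c, hp.1 = h) ∨
       (r = c.2 ∧ ∃ hp ∈ I.couplePref c, hp.2 = h))))

end HRCInst

namespace HRCInst

variable {R H : Type} [Fintype R] [DecidableEq R] [DecidableEq H]

/-- The ordered list of clone pairs replacing a pair `(h₁,h₂)` with `h₁ ≠ h₂`:
`(h_{1,1},h_{2,1}),(h_{1,2},h_{2,1}),…,(h_{1,c₁},h_{2,1}),(h_{1,1},h_{2,2}),…,(h_{1,c₁},h_{2,c₂})`. -/
def clonePairsDiff (I : HRCInst R H) (h1 h2 : H) : List ((H × ℕ) × (H × ℕ)) :=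
  (List.range (I.cap h2)).flatMap fun k2 =>
    (List.range (I.cap h1)).map fun k1 => ((h1, k1), (h2, k2))

/-- The ordered list of clone pairs replacing a pair `(h,h)`: all pairs of distinct
clones, in the order `(h_2,h_1),(h_3,h_1),…,(h_c,h_1),(h_1,h_2),(h_3,h_2),…,(h_{c−1},h_c)`. -/
def clonePairsSame (I : HRCInst R H) (h : H) : List ((H × ℕ) × (H × ℕ)) :=
  (List.range (I.cap h)).flatMap fun k2 =>
    ((List.range (I.cap h)).filter fun k1 => k1 ≠ k2).map fun k1 => ((h, k1), (h, k2))

/-- The one-to-one instance `I'` obtained from `I` by the cloning construction: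
each hospital `h` of capacity `c` is replaced by clones `(h,0),…,(h,c−1)` of
capacity 1 inheriting `h`'s preference list, and resident preference lists are
expanded accordingly. -/
def cloned (I : HRCInst R H) : HRCInst R (H × ℕ) where
  cap := fun _ => 1
  singles := I.singles
  couples := I.couples
  singlePref := fun r =>
    (I.singlePref r).flatMap fun h => (List.range (I.cap h)).map fun k => (h, k)
  couplePref := fun c =>
    (I.couplePref c).flatMap fun hp =>
      if hp.1 = hp.2 then I.clonePairsSame hp.1 else I.clonePairsDiff hp.1 hp.2
  hospPref := fun h => I.hospPref h.1

end HRCInst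

open List

set_option linter.unusedSectionVars false
namespace CloneAux

variable {α β γ : Type} [DecidableEq α] [DecidableEq β] [DecidableEq γ]

lemma idxOf_map_inj {fn : γ → β} (hfn : Function.Injective fn) (l : List γ) (x : γ) :
    (l.map fn).idxOf (fn x) = l.idxOf x := by
  induction l with
  | nil => rfl
  | cons a t ih =>
    by_cases hxa : x = a
    · subst hxa; simp [idxOf_cons_self]
    · rw [map_cons, idxOf_cons_ne _ (fun h => hxa (hfn h.symm)), idxOf_cons_ne _ (Ne.symm hxa), ih]

lemma sorted_idxOf_lt_iff {l : List ℕ} (hl : l.Pairwise (· < ·)) {x y : ℕ}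
    (hx : x ∈ l) (hy : y ∈ l) : l.idxOf x < l.idxOf y ↔ x < y := by
  induction l with
  | nil => cases hx
  | cons a t ih =>
    rcases pairwise_cons.1 hl with ⟨ha, ht⟩
    by_cases hxa : x = a
    · subst hxa
      by_cases hya : y = x
      · subst hya; simp
      · have hyt : y ∈ t := (mem_cons.1 hy).resolve_left hya
        rw [idxOf_cons_self, idxOf_cons_ne _ (Ne.symm hya)]
        simp [Nat.succ_pos, ha y hyt]
    · have hxt : x ∈ t := (mem_cons.1 hx).resolve_left hxa
      by_cases hya : y = a
      · subst hya
        rw [idxOf_cons_self, idxOf_cons_ne _ (Ne.symm hxa)]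
        constructor
        · intro h; omega
        · intro h; exact absurd (ha x hxt) (by omega)
      · have hyt : y ∈ t := (mem_cons.1 hy).resolve_left hya
        rw [idxOf_cons_ne _ (Ne.symm hxa), idxOf_cons_ne _ (Ne.symm hya), Nat.succ_lt_succ_iff,
          ih ht hxt hyt]

variable {l : List α} {f : α → List β} {g : β → α}

lemma flatMap_block_lt (H : ∀ a ∈ l, ∀ b ∈ f a, g b = a) {p q : α} {x y : β}
    (hp : p ∈ l) (hq : q ∈ l) (hx : x ∈ f p) (hy : y ∈ f q)
    (hpq : l.idxOf p < l.idxOf q) :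
    (l.flatMap f).idxOf x < (l.flatMap f).idxOf y := by
  induction l with
  | nil => cases hp
  | cons a t ih =>
    rw [flatMap_cons]
    have hqa : q ≠ a := by
      intro h; subst h; simp [idxOf_cons_self] at hpq
    have hyfa : y ∉ f a := by
      intro hy'
      exact hqa ((H q hq y hy).symm.trans (H a (mem_cons_self) y hy'))
    by_cases hpa : p = a
    · subst hpa
      rw [idxOf_append_of_mem hx, idxOf_append_of_notMem hyfa]
      calc (f p).idxOf x < (f p).length := idxOf_lt_length_iff.2 hx
        _ ≤ _ := Nat.le_add_right _ _
    · have hxfa : x ∉ f a := by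
        intro hx'
        exact hpa ((H p hp x hx).symm.trans (H a (mem_cons_self) x hx'))
      rw [idxOf_append_of_notMem hxfa, idxOf_append_of_notMem hyfa]
      apply Nat.add_lt_add_left
      have hpt : p ∈ t := (mem_cons.1 hp).resolve_left hpa
      have hqt : q ∈ t := (mem_cons.1 hq).resolve_left hqa
      refine ih (fun a' ha' b hb => H a' (mem_cons_of_mem _ ha') b hb) hpt hqt ?_
      rw [idxOf_cons_ne _ (Ne.symm hpa), idxOf_cons_ne _ (Ne.symm hqa)] at hpq
      exact Nat.succ_lt_succ_iff.1 hpq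

lemma flatMap_inner_lt (H : ∀ a ∈ l, ∀ b ∈ f a, g b = a) {p : α} {x y : β}
    (hp : p ∈ l) (hx : x ∈ f p) (hy : y ∈ f p)
    (hxy : (f p).idxOf x < (f p).idxOf y) :
    (l.flatMap f).idxOf x < (l.flatMap f).idxOf y := by
  induction l with
  | nil => cases hp
  | cons a t ih =>
    rw [flatMap_cons]
    by_cases hpa : p = a
    · subst hpa
      rw [idxOf_append_of_mem hx, idxOf_append_of_mem hy]; exact hxy
    · have hxfa : x ∉ f a := fun hx' =>
        hpa ((H p hp x hx).symm.trans (H a (mem_cons_self) x hx'))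
      have hyfa : y ∉ f a := fun hy' =>
        hpa ((H p hp y hy).symm.trans (H a (mem_cons_self) y hy'))
      rw [idxOf_append_of_notMem hxfa, idxOf_append_of_notMem hyfa]
      exact Nat.add_lt_add_left
        (ih (fun a' ha' b hb => H a' (mem_cons_of_mem _ ha') b hb)
          ((mem_cons.1 hp).resolve_left hpa)) _

lemma flatMap_lt_cases (H : ∀ a ∈ l, ∀ b ∈ f a, g b = a) {p q : α} {x y : β}
    (hp : p ∈ l) (hq : q ∈ l) (hx : x ∈ f p) (hy : y ∈ f q)
    (hlt : (l.flatMap f).idxOf x < (l.flatMap f).idxOf y) :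
    l.idxOf p < l.idxOf q ∨ (p = q ∧ (f p).idxOf x < (f p).idxOf y) := by
  rcases lt_trichotomy (l.idxOf p) (l.idxOf q) with h | h | h
  · exact Or.inl h
  · have hpq : p = q := (idxOf_inj hp).1 h
    subst hpq
    right
    refine ⟨rfl, ?_⟩
    rcases lt_trichotomy ((f p).idxOf x) ((f p).idxOf y) with h' | h' | h'
    · exact h'
    · have : x = y := (idxOf_inj hx).1 h'
      subst this; omega
    · exact absurd (flatMap_inner_lt H hp hy hx h') (by omega)
  · exact absurd (flatMap_block_lt H hq hp hy hx h) (by omega)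

lemma mem_flatMap_of_mem {p : α} {x : β} (hp : p ∈ l) (hx : x ∈ f p) :
    x ∈ l.flatMap f := mem_flatMap.2 ⟨p, hp, hx⟩

end CloneAux

attribute [local instance 2000] instBEqOfDecidableEq

section CloneLemmasTest
open CloneAux List
namespace HRCInst
variable {R H : Type} [Fintype R] [DecidableEq R] [DecidableEq H] (I : HRCInst R H)

/-- lex order on clone pairs: second clone index major, first minor. -/
def KLex (p q : (H × ℕ) × (H × ℕ)) : Prop :=
  p.2.2 < q.2.2 ∨ (p.2.2 = q.2.2 ∧ p.1.2 < q.1.2)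

lemma mem_clonePairsDiff {h1 h2 : H} {p : (H×ℕ)×(H×ℕ)} :
    p ∈ I.clonePairsDiff h1 h2 ↔
      p.1.1 = h1 ∧ p.2.1 = h2 ∧ p.1.2 < I.cap h1 ∧ p.2.2 < I.cap h2 := by
  obtain ⟨⟨x,k1⟩,⟨y,k2⟩⟩ := p
  simp only [clonePairsDiff, mem_flatMap, mem_map, mem_range, Prod.mk.injEq]
  constructor
  · rintro ⟨a, ha, b, hb, ⟨hx,hk1⟩, hy, hk2⟩; subst hx; subst hy; subst hk1; subst hk2
    exact ⟨rfl, rfl, hb, ha⟩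
  · rintro ⟨hx, hy, hk1, hk2⟩; subst hx; subst hy
    exact ⟨k2, hk2, k1, hk1, ⟨rfl, rfl⟩, rfl, rfl⟩

lemma mem_clonePairsSame {h : H} {p : (H×ℕ)×(H×ℕ)} :
    p ∈ I.clonePairsSame h ↔
      p.1.1 = h ∧ p.2.1 = h ∧ p.1.2 < I.cap h ∧ p.2.2 < I.cap h ∧ p.1.2 ≠ p.2.2 := by
  obtain ⟨⟨x,k1⟩,⟨y,k2⟩⟩ := p
  simp only [clonePairsSame, mem_flatMap, mem_map, mem_filter, mem_range, Prod.mk.injEq,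
    decide_eq_true_eq]
  constructor
  · rintro ⟨a, ha, b, ⟨hb, hba⟩, ⟨hx,hk1⟩, hy, hk2⟩
    subst hx; subst hy; subst hk1; subst hk2
    exact ⟨rfl, rfl, hb, ha, hba⟩
  · rintro ⟨hx, hy, hk1, hk2, hne⟩; subst hx; subst hy
    exact ⟨k2, hk2, k1, ⟨hk1, hne⟩, ⟨rfl, rfl⟩, rfl, rfl⟩


lemma klex_trichotomy {p q : (H × ℕ) × (H × ℕ)} (h1 : p.1.1 = q.1.1) (h2 : p.2.1 = q.2.1)
    (hne : p ≠ q) : KLex p q ∨ KLex q p := by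
  obtain ⟨⟨x,k1⟩,⟨y,k2⟩⟩ := p; obtain ⟨⟨x',k1'⟩,⟨y',k2'⟩⟩ := q
  simp only at h1 h2; subst h1; subst h2
  unfold KLex; simp only
  by_cases hk2 : k2 = k2'
  · subst hk2
    have : k1 ≠ k1' := fun h => hne (by simp [h])
    omega
  · omega

private lemma hgDiff (h1 h2 : H) : ∀ a ∈ List.range (I.cap h2),
    ∀ b ∈ (List.range (I.cap h1)).map (fun k1 => ((h1,k1),(h2,a))),
      (fun pr : (H×ℕ)×(H×ℕ) => pr.2.2) b = a := by
  intro a _ b hb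
  obtain ⟨k1, _, rfl⟩ := List.mem_map.1 hb
  rfl

private lemma hgSame (h : H) : ∀ a ∈ List.range (I.cap h),
    ∀ b ∈ ((List.range (I.cap h)).filter (fun k1 => k1 ≠ a)).map (fun k1 => ((h,k1),(h,a))),
      (fun pr : (H×ℕ)×(H×ℕ) => pr.2.2) b = a := by
  intro a _ b hb
  obtain ⟨k1, _, rfl⟩ := List.mem_map.1 hb
  rfl

lemma clonePairsDiff_lt_of_klex {h1 h2 : H} {p q : (H×ℕ)×(H×ℕ)}
    (hp : p ∈ I.clonePairsDiff h1 h2) (hq : q ∈ I.clonePairsDiff h1 h2) (h : KLex p q) :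
    (I.clonePairsDiff h1 h2).idxOf p < (I.clonePairsDiff h1 h2).idxOf q := by
  obtain ⟨⟨x,k1⟩,⟨y,k2⟩⟩ := p; obtain ⟨⟨x',k1'⟩,⟨y',k2'⟩⟩ := q
  rw [mem_clonePairsDiff] at hp hq
  obtain ⟨hx, hy, hk1, hk2⟩ := hp; obtain ⟨hx', hy', hk1', hk2'⟩ := hq
  simp only at hx hy hk1 hk2 hx' hy' hk1' hk2'
  subst hx; subst hy; subst hx'; subst hy'
  have hinj : ∀ k2, Function.Injective (fun k1 => (((x':H),(k1:ℕ)),((y':H),(k2:ℕ)))) := by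
    intro k2 a b hab; simpa using hab
  rcases h with hlt | ⟨heq, hlt⟩
  · exact flatMap_block_lt (I.hgDiff x' y') (List.mem_range.2 hk2) (List.mem_range.2 hk2')
      (List.mem_map.2 ⟨k1, List.mem_range.2 hk1, rfl⟩)
      (List.mem_map.2 ⟨k1', List.mem_range.2 hk1', rfl⟩)
      ((sorted_idxOf_lt_iff (List.pairwise_lt_range) (List.mem_range.2 hk2)
        (List.mem_range.2 hk2')).2 hlt)
  · simp only at heq hlt; subst heq
    refine flatMap_inner_lt (I.hgDiff x' y') (List.mem_range.2 hk2)
      (List.mem_map.2 ⟨k1, List.mem_range.2 hk1, rfl⟩)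
      (List.mem_map.2 ⟨k1', List.mem_range.2 hk1', rfl⟩) ?_
    rw [show (((x':H),k1),((y':H),k2)) = (fun k1 => (((x':H),(k1:ℕ)),((y':H),(k2:ℕ)))) k1 from rfl,
      show (((x':H),k1'),((y':H),k2)) = (fun k1 => (((x':H),(k1:ℕ)),((y':H),(k2:ℕ)))) k1' from rfl,
      idxOf_map_inj (hinj k2), idxOf_map_inj (hinj k2)]
    exact (sorted_idxOf_lt_iff (List.pairwise_lt_range) (List.mem_range.2 hk1)
      (List.mem_range.2 hk1')).2 hlt

lemma clonePairsSame_lt_of_klex {h : H} {p q : (H×ℕ)×(H×ℕ)}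
    (hp : p ∈ I.clonePairsSame h) (hq : q ∈ I.clonePairsSame h) (hkl : KLex p q) :
    (I.clonePairsSame h).idxOf p < (I.clonePairsSame h).idxOf q := by
  obtain ⟨⟨x,k1⟩,⟨y,k2⟩⟩ := p; obtain ⟨⟨x',k1'⟩,⟨y',k2'⟩⟩ := q
  rw [mem_clonePairsSame] at hp hq
  obtain ⟨hx, hy, hk1, hk2, hne⟩ := hp; obtain ⟨hx', hy', hk1', hk2', hne'⟩ := hq
  simp only at hx hy hk1 hk2 hne hx' hy' hk1' hk2' hne'
  subst hx; subst hy; subst hx'; subst hy'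
  have hinj : ∀ k2, Function.Injective (fun k1 => (((y':H),(k1:ℕ)),((y':H),(k2:ℕ)))) := by
    intro k2 a b hab; simpa using hab
  have hsorted : ∀ k2 : ℕ, ((List.range (I.cap y')).filter (fun k1 => k1 ≠ k2)).Pairwise (· < ·) :=
    fun k2 => List.Pairwise.filter _ (List.pairwise_lt_range)
  have hmemf : ∀ {a b : ℕ}, a < I.cap y' → a ≠ b →
      a ∈ (List.range (I.cap y')).filter (fun k1 => k1 ≠ b) := by
    intro a b ha hab
    rw [List.mem_filter]
    exact ⟨List.mem_range.2 ha, by simpa using hab⟩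
  rcases hkl with hlt | ⟨heq, hlt⟩
  · exact flatMap_block_lt (I.hgSame y') (List.mem_range.2 hk2) (List.mem_range.2 hk2')
      (List.mem_map.2 ⟨k1, hmemf hk1 hne, rfl⟩)
      (List.mem_map.2 ⟨k1', hmemf hk1' hne', rfl⟩)
      ((sorted_idxOf_lt_iff (List.pairwise_lt_range) (List.mem_range.2 hk2)
        (List.mem_range.2 hk2')).2 hlt)
  · simp only at heq hlt; subst heq
    refine flatMap_inner_lt (I.hgSame y') (List.mem_range.2 hk2)
      (List.mem_map.2 ⟨k1, hmemf hk1 hne, rfl⟩)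
      (List.mem_map.2 ⟨k1', hmemf hk1' hne', rfl⟩) ?_
    rw [show (((y':H),k1),((y':H),k2)) = (fun k1 => (((y':H),(k1:ℕ)),((y':H),(k2:ℕ)))) k1 from rfl,
      show (((y':H),k1'),((y':H),k2)) = (fun k1 => (((y':H),(k1:ℕ)),((y':H),(k2:ℕ)))) k1' from rfl,
      idxOf_map_inj (hinj k2), idxOf_map_inj (hinj k2)]
    exact (sorted_idxOf_lt_iff (hsorted k2) (hmemf hk1 hne) (hmemf hk1' hne')).2 hlt

lemma clonePairsDiff_lt_iff {h1 h2 : H} {p q : (H×ℕ)×(H×ℕ)}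
    (hp : p ∈ I.clonePairsDiff h1 h2) (hq : q ∈ I.clonePairsDiff h1 h2) :
    (I.clonePairsDiff h1 h2).idxOf p < (I.clonePairsDiff h1 h2).idxOf q ↔ KLex p q := by
  refine ⟨fun hlt => ?_, I.clonePairsDiff_lt_of_klex hp hq⟩
  have hne : p ≠ q := fun hpq => by rw [hpq] at hlt; omega
  rcases klex_trichotomy (by
      rw [mem_clonePairsDiff] at hp hq; rw [hp.1, hq.1]) (by
      rw [mem_clonePairsDiff] at hp hq; rw [hp.2.1, hq.2.1]) hne with h | h
  · exact h
  · exact absurd (I.clonePairsDiff_lt_of_klex hq hp h) (by omega)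

lemma clonePairsSame_lt_iff {h : H} {p q : (H×ℕ)×(H×ℕ)}
    (hp : p ∈ I.clonePairsSame h) (hq : q ∈ I.clonePairsSame h) :
    (I.clonePairsSame h).idxOf p < (I.clonePairsSame h).idxOf q ↔ KLex p q := by
  refine ⟨fun hlt => ?_, I.clonePairsSame_lt_of_klex hp hq⟩
  have hne : p ≠ q := fun hpq => by rw [hpq] at hlt; omega
  rcases klex_trichotomy (by
      rw [mem_clonePairsSame] at hp hq; rw [hp.1, hq.1]) (by
      rw [mem_clonePairsSame] at hp hq; rw [hp.2.1, hq.2.1]) hne with h | h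
  · exact h
  · exact absurd (I.clonePairsSame_lt_of_klex hq hp h) (by omega)

private lemma hgS (r : R) : ∀ a ∈ I.singlePref r,
    ∀ b ∈ (List.range (I.cap a)).map (fun k => ((a,k) : H × ℕ)), b.1 = a := by
  intro a _ b hb
  obtain ⟨k, _, rfl⟩ := List.mem_map.1 hb
  rfl

lemma mem_singlePref_cloned {r : R} {p : H × ℕ} :
    p ∈ I.cloned.singlePref r ↔ p.1 ∈ I.singlePref r ∧ p.2 < I.cap p.1 := by
  show p ∈ (I.singlePref r).flatMap _ ↔ _
  rw [List.mem_flatMap]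
  constructor
  · rintro ⟨a, ha, hb⟩
    obtain ⟨k, hk, rfl⟩ := List.mem_map.1 hb
    exact ⟨ha, List.mem_range.1 hk⟩
  · rintro ⟨h1, h2⟩
    exact ⟨p.1, h1, List.mem_map.2 ⟨p.2, List.mem_range.2 h2, rfl⟩⟩

lemma prefers_single_cloned_of_prefers {r : R} {p q : H × ℕ}
    (hp : p.2 < I.cap p.1) (hq : q.2 < I.cap q.1)
    (h : Prefers (I.singlePref r) p.1 q.1) :
    Prefers (I.cloned.singlePref r) p q := by
  obtain ⟨hm1, hm2, hlt⟩ := h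
  refine ⟨I.mem_singlePref_cloned.2 ⟨hm1, hp⟩, I.mem_singlePref_cloned.2 ⟨hm2, hq⟩, ?_⟩
  exact flatMap_block_lt (I.hgS r) hm1 hm2
    (List.mem_map.2 ⟨p.2, List.mem_range.2 hp, rfl⟩)
    (List.mem_map.2 ⟨q.2, List.mem_range.2 hq, rfl⟩) hlt

lemma prefers_single_cloned_of_lt {r : R} {p q : H × ℕ}
    (hm : p.1 ∈ I.singlePref r) (heq : p.1 = q.1) (hq : q.2 < I.cap q.1)
    (hlt : p.2 < q.2) :
    Prefers (I.cloned.singlePref r) p q := by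
  obtain ⟨x, k⟩ := p; obtain ⟨y, k'⟩ := q
  simp only at heq hq hlt hm; subst heq
  have hp' : k < I.cap x := lt_trans hlt hq
  refine ⟨I.mem_singlePref_cloned.2 ⟨hm, hp'⟩, I.mem_singlePref_cloned.2 ⟨hm, hq⟩, ?_⟩
  refine flatMap_inner_lt (I.hgS r) hm
    (List.mem_map.2 ⟨k, List.mem_range.2 hp', rfl⟩)
    (List.mem_map.2 ⟨k', List.mem_range.2 hq, rfl⟩) ?_
  have hinj : Function.Injective (fun k => ((x,k) : H × ℕ)) := by
    intro a b hab; simpa using hab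
  rw [show ((x,k) : H × ℕ) = (fun k => ((x,k) : H × ℕ)) k from rfl,
    show ((x,k') : H × ℕ) = (fun k => ((x,k) : H × ℕ)) k' from rfl,
    idxOf_map_inj hinj, idxOf_map_inj hinj]
  exact (sorted_idxOf_lt_iff (List.pairwise_lt_range) (List.mem_range.2 hp')
    (List.mem_range.2 hq)).2 hlt

lemma prefers_single_cloned_cases {r : R} {p q : H × ℕ}
    (h : Prefers (I.cloned.singlePref r) p q) :
    p.1 ∈ I.singlePref r ∧ q.1 ∈ I.singlePref r ∧ p.2 < I.cap p.1 ∧ q.2 < I.cap q.1 ∧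
      (Prefers (I.singlePref r) p.1 q.1 ∨ (p.1 = q.1 ∧ p.2 < q.2)) := by
  obtain ⟨hp, hq, hlt⟩ := h
  obtain ⟨hm1, hc1⟩ := I.mem_singlePref_cloned.1 hp
  obtain ⟨hm2, hc2⟩ := I.mem_singlePref_cloned.1 hq
  refine ⟨hm1, hm2, hc1, hc2, ?_⟩
  have hpb : p ∈ (List.range (I.cap p.1)).map (fun k => ((p.1,k) : H × ℕ)) :=
    List.mem_map.2 ⟨p.2, List.mem_range.2 hc1, rfl⟩
  have hqb : q ∈ (List.range (I.cap q.1)).map (fun k => ((q.1,k) : H × ℕ)) :=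
    List.mem_map.2 ⟨q.2, List.mem_range.2 hc2, rfl⟩
  rcases flatMap_lt_cases (I.hgS r) hm1 hm2 hpb hqb hlt with hcase | ⟨heq, hinner⟩
  · exact Or.inl ⟨hm1, hm2, hcase⟩
  · right
    refine ⟨heq, ?_⟩
    obtain ⟨x, k⟩ := p; obtain ⟨y, k'⟩ := q
    simp only at heq hc1 hc2 hinner ⊢
    subst heq
    have hinj : Function.Injective (fun k => ((x,k) : H × ℕ)) := by
      intro a b hab; simpa using hab
    rw [show ((x,k) : H × ℕ) = (fun k => ((x,k) : H × ℕ)) k from rfl,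
      show ((x,k') : H × ℕ) = (fun k => ((x,k) : H × ℕ)) k' from rfl,
      idxOf_map_inj hinj, idxOf_map_inj hinj] at hinner
    exact (sorted_idxOf_lt_iff (List.pairwise_lt_range) (List.mem_range.2 hc1)
      (List.mem_range.2 hc2)).1 hinner

private lemma hgC (c : R × R) : ∀ hp ∈ I.couplePref c,
    ∀ b ∈ (if hp.1 = hp.2 then I.clonePairsSame hp.1 else I.clonePairsDiff hp.1 hp.2),
      ((b.1.1, b.2.1) : H × H) = hp := by
  intro hp _ b hb
  by_cases h : hp.1 = hp.2
  · rw [if_pos h, mem_clonePairsSame] at hb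
    exact Prod.ext hb.1 (hb.2.1.trans h)
  · rw [if_neg h, mem_clonePairsDiff] at hb
    exact Prod.ext hb.1 hb.2.1

lemma couplePref_cloned_eq (c : R × R) : I.cloned.couplePref c =
    (I.couplePref c).flatMap fun hp =>
      if hp.1 = hp.2 then I.clonePairsSame hp.1 else I.clonePairsDiff hp.1 hp.2 := rfl

lemma mem_couplePref_cloned {c : R × R} {p : (H × ℕ) × (H × ℕ)} :
    p ∈ I.cloned.couplePref c ↔
      (p.1.1, p.2.1) ∈ I.couplePref c ∧ p.1.2 < I.cap p.1.1 ∧ p.2.2 < I.cap p.2.1 ∧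
        (p.1.1 = p.2.1 → p.1.2 ≠ p.2.2) := by
  rw [couplePref_cloned_eq, List.mem_flatMap]
  constructor
  · rintro ⟨a, ha, hb⟩
    have heq := I.hgC c a ha p hb
    subst heq
    by_cases h : p.1.1 = p.2.1
    · rw [if_pos h, mem_clonePairsSame] at hb
      exact ⟨ha, hb.2.2.1, h ▸ hb.2.2.2.1, fun _ => hb.2.2.2.2⟩
    · rw [if_neg h, mem_clonePairsDiff] at hb
      exact ⟨ha, hb.2.2.1, hb.2.2.2, fun hh => absurd hh h⟩
  · rintro ⟨hm, h1, h2, hne⟩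
    refine ⟨(p.1.1, p.2.1), hm, ?_⟩
    by_cases h : p.1.1 = p.2.1
    · rw [if_pos h, mem_clonePairsSame]
      exact ⟨rfl, h.symm, h1, h ▸ h2, hne h⟩
    · rw [if_neg h, mem_clonePairsDiff]
      exact ⟨rfl, rfl, h1, h2⟩

lemma prefers_couple_cloned_of_prefers {c : R × R} {p q : (H × ℕ) × (H × ℕ)}
    (hp : p ∈ I.cloned.couplePref c) (hq : q ∈ I.cloned.couplePref c)
    (h : Prefers (I.couplePref c) (p.1.1, p.2.1) (q.1.1, q.2.1)) :
    Prefers (I.cloned.couplePref c) p q := by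
  refine ⟨hp, hq, ?_⟩
  rw [couplePref_cloned_eq] at hp hq ⊢
  obtain ⟨a, ha, hpb⟩ := List.mem_flatMap.1 hp
  obtain ⟨b, hb, hqb⟩ := List.mem_flatMap.1 hq
  have hap := I.hgC c a ha p hpb
  have hbq := I.hgC c b hb q hqb
  refine flatMap_block_lt (I.hgC c) ha hb hpb hqb ?_
  rw [← hap, ← hbq]
  exact h.2.2

lemma prefers_couple_cloned_of_klex {c : R × R} {p q : (H × ℕ) × (H × ℕ)}
    (hp : p ∈ I.cloned.couplePref c) (hq : q ∈ I.cloned.couplePref c)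
    (heq : ((p.1.1, p.2.1) : H × H) = (q.1.1, q.2.1)) (hk : KLex p q) :
    Prefers (I.cloned.couplePref c) p q := by
  refine ⟨hp, hq, ?_⟩
  rw [couplePref_cloned_eq] at hp hq ⊢
  obtain ⟨a, ha, hpb⟩ := List.mem_flatMap.1 hp
  obtain ⟨b, hb, hqb⟩ := List.mem_flatMap.1 hq
  have hap := I.hgC c a ha p hpb
  have hbq := I.hgC c b hb q hqb
  have hab : a = b := by rw [← hap, ← hbq, heq]
  subst hab
  refine flatMap_inner_lt (I.hgC c) ha hpb hqb ?_
  by_cases h : a.1 = a.2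
  · rw [if_pos h] at hpb hqb ⊢
    exact I.clonePairsSame_lt_of_klex hpb hqb hk
  · rw [if_neg h] at hpb hqb ⊢
    exact I.clonePairsDiff_lt_of_klex hpb hqb hk

lemma prefers_couple_cloned_cases {c : R × R} {p q : (H × ℕ) × (H × ℕ)}
    (h : Prefers (I.cloned.couplePref c) p q) :
    p ∈ I.cloned.couplePref c ∧ q ∈ I.cloned.couplePref c ∧
      (Prefers (I.couplePref c) (p.1.1, p.2.1) (q.1.1, q.2.1) ∨
        (((p.1.1, p.2.1) : H × H) = (q.1.1, q.2.1) ∧ KLex p q)) := by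
  obtain ⟨hp, hq, hlt⟩ := h
  refine ⟨hp, hq, ?_⟩
  rw [couplePref_cloned_eq] at hp hq
  rw [show I.cloned.couplePref c = (I.couplePref c).flatMap fun hp =>
      if hp.1 = hp.2 then I.clonePairsSame hp.1 else I.clonePairsDiff hp.1 hp.2 from rfl] at hlt
  obtain ⟨a, ha, hpb⟩ := List.mem_flatMap.1 hp
  obtain ⟨b, hb, hqb⟩ := List.mem_flatMap.1 hq
  have hap := I.hgC c a ha p hpb
  have hbq := I.hgC c b hb q hqb
  rcases flatMap_lt_cases (I.hgC c) ha hb hpb hqb hlt with hcase | ⟨hab, hinner⟩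
  · left
    rw [← hap] at ha; rw [← hbq] at hb; rw [← hap, ← hbq] at hcase
    exact ⟨ha, hb, hcase⟩
  · right
    subst hab
    refine ⟨by rw [hap, hbq], ?_⟩
    by_cases hc : a.1 = a.2
    · rw [if_pos hc] at hpb hqb hinner
      exact (I.clonePairsSame_lt_iff hpb hqb).1 hinner
    · rw [if_neg hc] at hpb hqb hinner
      exact (I.clonePairsDiff_lt_iff hpb hqb).1 hinner

lemma prefers_trans {α : Type} [DecidableEq α] {l : List α} {x y z : α}
    (h1 : Prefers l x y) (h2 : Prefers l y z) : Prefers l x z :=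
  ⟨h1.1, h2.2.1, lt_trans h1.2.2 h2.2.2⟩

lemma prefers_asymm {α : Type} [DecidableEq α] {l : List α} {x y : α}
    (h1 : Prefers l x y) (h2 : Prefers l y x) : False := by
  have := h1.2.2; have := h2.2.2; omega

/-- rank of `r` among the assignees of `h` by `h`'s preference. -/
def rk (M : R → Option H) (h : H) (r : R) : ℕ :=
  ((assignees M h).filter fun r' =>
    (I.hospPref h).idxOf r' < (I.hospPref h).idxOf r).card

/-- the canonical cloned matching. -/
def cloneM (M : R → Option H) : R → Option (H × ℕ) :=
  fun r => (M r).map fun h => (h, I.rk M h r)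

variable {M : R → Option H}

lemma mem_assignees {M : R → Option H} {h : H} {r : R} :
    r ∈ assignees M h ↔ M r = some h := by
  simp [assignees]

lemma mem_hospPref_of_assigned (hwf : I.WellFormed) (hM : I.IsMatching M)
    {h : H} {r : R} (hr : r ∈ assignees M h) : r ∈ I.hospPref h := by
  rw [mem_assignees] at hr
  have hsome : (M r).isSome := by rw [hr]; rfl
  rcases hM.2.2.2 r hsome with hs | ⟨c, hc, hrc⟩
  · exact (hwf.2.2.2.2.2.2.2.2.2 h r).2 (Or.inl ⟨hs, hM.1 r hs h hr⟩)
  · rcases (hM.2.1 c hc) with ⟨h1, h2⟩ | ⟨hp, hmem, h1, h2⟩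
    · rcases hrc with rfl | rfl
      · rw [h1] at hr; cases hr
      · rw [h2] at hr; cases hr
    · refine (hwf.2.2.2.2.2.2.2.2.2 h r).2 (Or.inr ⟨c, hc, ?_⟩)
      rcases hrc with rfl | rfl
      · exact Or.inl ⟨rfl, hp, hmem, by rw [h1] at hr; injection hr⟩
      · exact Or.inr ⟨rfl, hp, hmem, by rw [h2] at hr; injection hr⟩

lemma rk_lt_card {h : H} {r : R} (hr : r ∈ assignees M h) :
    I.rk M h r < (assignees M h).card := by
  apply Finset.card_lt_card
  constructor
  · exact Finset.filter_subset _ _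
  · intro hsub
    have := Finset.mem_filter.1 (hsub hr)
    omega

lemma rk_lt_rk {h : H} {r r' : R} (hr : r ∈ assignees M h) (hr' : r' ∈ assignees M h)
    (hidx : (I.hospPref h).idxOf r < (I.hospPref h).idxOf r') :
    I.rk M h r < I.rk M h r' := by
  apply Finset.card_lt_card
  constructor
  · intro a ha
    rw [Finset.mem_filter] at ha ⊢
    exact ⟨ha.1, lt_trans ha.2 hidx⟩
  · intro hsub
    have := Finset.mem_filter.1 (hsub (Finset.mem_filter.2 ⟨hr, hidx⟩))
    omega

lemma rk_inj (hwf : I.WellFormed) (hM : I.IsMatching M) {h : H} {r r' : R}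
    (hr : r ∈ assignees M h) (hr' : r' ∈ assignees M h)
    (heq : I.rk M h r = I.rk M h r') : r = r' := by
  by_contra hne
  have h1 := I.mem_hospPref_of_assigned hwf hM hr
  have h2 := I.mem_hospPref_of_assigned hwf hM hr'
  have hne' : (I.hospPref h).idxOf r ≠ (I.hospPref h).idxOf r' :=
    fun hh => hne ((List.idxOf_inj h1).1 hh)
  rcases lt_or_gt_of_ne hne' with hlt | hlt
  · exact absurd (I.rk_lt_rk hr hr' hlt) (by omega)
  · exact absurd (I.rk_lt_rk hr' hr hlt) (by omega)

lemma rk_surj (hwf : I.WellFormed) (hM : I.IsMatching M) {h : H} {k : ℕ}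
    (hk : k < (assignees M h).card) : ∃ r ∈ assignees M h, I.rk M h r = k := by
  have himg : (assignees M h).image (I.rk M h) = Finset.range (assignees M h).card := by
    apply Finset.eq_of_subset_of_card_le
    · intro x hx
      obtain ⟨r, hr, rfl⟩ := Finset.mem_image.1 hx
      exact Finset.mem_range.2 (I.rk_lt_card hr)
    · rw [Finset.card_range, Finset.card_image_of_injOn
        (fun a ha b hb hab => I.rk_inj hwf hM ha hb hab)]
  have : k ∈ (assignees M h).image (I.rk M h) := by
    rw [himg]; exact Finset.mem_range.2 hk
  obtain ⟨r, hr, hrk⟩ := Finset.mem_image.1 this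
  exact ⟨r, hr, hrk⟩

lemma cloneM_some_iff {r : R} {h : H} {k : ℕ} :
    I.cloneM M r = some (h, k) ↔ M r = some h ∧ I.rk M h r = k := by
  unfold cloneM
  cases hMr : M r with
  | none => simp
  | some h' =>
    simp only [Option.map_some, Option.some.injEq, Prod.mk.injEq]
    constructor
    · rintro ⟨rfl, rfl⟩; exact ⟨rfl, rfl⟩
    · rintro ⟨heq, hrk⟩; subst heq; exact ⟨rfl, hrk⟩

lemma cloneM_none_iff {r : R} : I.cloneM M r = none ↔ M r = none := by
  unfold cloneM; cases hMr : M r <;> simp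

lemma assignees_cloneM {h : H} {k : ℕ} :
    assignees (I.cloneM M) (h, k) = (assignees M h).filter fun r => I.rk M h r = k := by
  ext r
  rw [mem_assignees, Finset.mem_filter, mem_assignees, cloneM_some_iff]

lemma card_assignees_cloneM_le_one (hwf : I.WellFormed) (hM : I.IsMatching M)
    {h : H} {k : ℕ} : (assignees (I.cloneM M) (h, k)).card ≤ 1 := by
  rw [assignees_cloneM, Finset.card_le_one]
  intro a ha b hb
  rw [Finset.mem_filter] at ha hb
  exact I.rk_inj hwf hM ha.1 hb.1 (ha.2.trans hb.2.symm)

lemma cloneM_nonempty_iff (hwf : I.WellFormed) (hM : I.IsMatching M) {h : H} {k : ℕ} :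
    (assignees (I.cloneM M) (h, k)).Nonempty ↔ k < (assignees M h).card := by
  rw [assignees_cloneM]
  constructor
  · rintro ⟨r, hr⟩
    rw [Finset.mem_filter] at hr
    exact hr.2 ▸ I.rk_lt_card hr.1
  · intro hk
    obtain ⟨r, hr, hrk⟩ := I.rk_surj hwf hM hk
    exact ⟨r, Finset.mem_filter.2 ⟨hr, hrk⟩⟩

lemma undersub_cloned_iff {M' : R → Option (H × ℕ)} {p : H × ℕ} :
    I.cloned.UnderSub M' p ↔ assignees M' p = ∅ := by
  unfold UnderSub cloned
  simp only [Finset.card_eq_zero.symm]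
  omega

lemma undersub_of_cloneM_empty (hwf : I.WellFormed) (hM : I.IsMatching M) {h : H} {k : ℕ}
    (hk : k < I.cap h) (hemp : assignees (I.cloneM M) (h, k) = ∅) : I.UnderSub M h := by
  have hne : ¬ (assignees (I.cloneM M) (h,k)).Nonempty := by
    rw [hemp]; exact Finset.not_nonempty_empty
  have hiff := I.cloneM_nonempty_iff hwf hM (h := h) (k := k)
  have hcard : ¬ k < (assignees M h).card := fun hlt => hne (hiff.2 hlt)
  unfold UnderSub
  omega

/-- occupant of an earlier clone is preferred by the hospital. -/
lemma occupant_pref (hwf : I.WellFormed) (hM : I.IsMatching M) {h : H} {k : ℕ} {r r' : R}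
    (hr' : r' ∈ assignees (I.cloneM M) (h, k)) (hr : r ∈ assignees M h)
    (hk : k < I.rk M h r) :
    (I.hospPref h).idxOf r' < (I.hospPref h).idxOf r := by
  rw [assignees_cloneM, Finset.mem_filter] at hr'
  obtain ⟨hr'a, hrk'⟩ := hr'
  have h1 := I.mem_hospPref_of_assigned hwf hM hr'a
  have h2 := I.mem_hospPref_of_assigned hwf hM hr
  rcases lt_trichotomy ((I.hospPref h).idxOf r') ((I.hospPref h).idxOf r) with hlt | heq | hgt
  · exact hlt
  · rw [(List.idxOf_inj h1).1 heq] at hrk'; omega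
  · exact absurd (I.rk_lt_rk hr hr'a hgt) (by omega)

/-- projection of a cloned matching. -/
def projM (M' : R → Option (H × ℕ)) : R → Option H := fun r => (M' r).map Prod.fst

/-- clone index of a matched resident. -/
def cidx (M' : R → Option (H × ℕ)) (r : R) : ℕ := ((M' r).map Prod.snd).getD 0

variable {M' : R → Option (H × ℕ)}

lemma projM_some_iff {r : R} {h : H} : projM M' r = some h ↔ ∃ k, M' r = some (h, k) := by
  unfold projM
  cases hr : M' r with
  | none => simp
  | some p =>
    obtain ⟨h', k⟩ := p
    simp only [Option.map_some, Option.some.injEq, Prod.mk.injEq]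
    constructor
    · rintro rfl; exact ⟨k, rfl, rfl⟩
    · rintro ⟨k', rfl, _⟩; rfl

lemma projM_none_iff {r : R} : projM M' r = none ↔ M' r = none := by
  unfold projM; cases hr : M' r <;> simp

lemma clone_lt_cap (hM' : I.cloned.IsMatching M') {r : R} {h : H} {k : ℕ}
    (hr : M' r = some (h, k)) : k < I.cap h := by
  have hsome : (M' r).isSome := by rw [hr]; rfl
  rcases hM'.2.2.2 r hsome with hs | ⟨c, hc, hrc⟩
  · have := hM'.1 r hs (h, k) hr
    exact (I.mem_singlePref_cloned.1 this).2
  · rcases hM'.2.1 c hc with ⟨h1, h2⟩ | ⟨hp, hmem, h1, h2⟩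
    · rcases hrc with rfl | rfl
      · rw [h1] at hr; cases hr
      · rw [h2] at hr; cases hr
    · have hm := I.mem_couplePref_cloned.1 hmem
      rcases hrc with rfl | rfl
      · rw [h1] at hr; injection hr with hr
        have h3 := hm.2.1; rw [hr] at h3; exact h3
      · rw [h2] at hr; injection hr with hr
        have h3 := hm.2.2.1; rw [hr] at h3; exact h3

lemma mem_assignees_projM {h : H} {r : R} :
    r ∈ assignees (projM M') h ↔ ∃ k, M' r = some (h, k) := by
  rw [mem_assignees, projM_some_iff]

lemma card_clone_le_one (hM' : I.cloned.IsMatching M') (p : H × ℕ) :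
    (assignees M' p).card ≤ 1 := hM'.2.2.1 p

lemma card_assignees_projM_le (hM' : I.cloned.IsMatching M') (h : H) :
    (assignees (projM M') h).card ≤ I.cap h := by
  rw [← Finset.card_range (I.cap h)]
  refine Finset.card_le_card_of_injOn (cidx M') (fun r hr => ?_) (fun r hr r' hr' heq => ?_)
  · obtain ⟨k, hk⟩ := mem_assignees_projM.1 hr
    rw [Finset.mem_coe, Finset.mem_range]
    have : cidx M' r = k := by unfold cidx; rw [hk]; rfl
    rw [this]
    exact I.clone_lt_cap hM' hk
  · obtain ⟨k, hk⟩ := mem_assignees_projM.1 hr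
    obtain ⟨k', hk'⟩ := mem_assignees_projM.1 hr'
    have e1 : cidx M' r = k := by unfold cidx; rw [hk]; rfl
    have e2 : cidx M' r' = k' := by unfold cidx; rw [hk']; rfl
    rw [e1, e2] at heq
    subst heq
    have m1 : r ∈ assignees M' (h, k) := mem_assignees.2 hk
    have m2 : r' ∈ assignees M' (h, k) := mem_assignees.2 hk'
    exact Finset.card_le_one.1 (I.card_clone_le_one hM' (h, k)) r m1 r' m2

lemma nonempty_clones_card_le (h : H) :
    ((Finset.range (I.cap h)).filter fun k => (assignees M' (h, k)).Nonempty).card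
      ≤ (assignees (projM M') h).card := by
  calc ((Finset.range (I.cap h)).filter fun k => (assignees M' (h, k)).Nonempty).card
      ≤ ((assignees (projM M') h).image (cidx M')).card := by
        apply Finset.card_le_card
        intro k hk
        rw [Finset.mem_filter] at hk
        obtain ⟨r, hr⟩ := hk.2
        rw [mem_assignees] at hr
        refine Finset.mem_image.2 ⟨r, mem_assignees_projM.2 ⟨k, hr⟩, ?_⟩
        unfold cidx; rw [hr]; rfl
    _ ≤ (assignees (projM M') h).card := Finset.card_image_le

lemma empty_clones_card (h : H) :
    (I.cap h : ℤ) - (assignees (projM M') h).card ≤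
      ((Finset.range (I.cap h)).filter fun k => assignees M' (h, k) = ∅).card := by
  have hsplit := Finset.card_filter_add_card_filter_not
    (s := Finset.range (I.cap h)) (p := fun k => (assignees M' (h, k)).Nonempty)
  rw [Finset.card_range] at hsplit
  have hle := I.nonempty_clones_card_le (M' := M') h
  have heq : ((Finset.range (I.cap h)).filter fun k => ¬ (assignees M' (h, k)).Nonempty) =
      ((Finset.range (I.cap h)).filter fun k => assignees M' (h, k) = ∅) := by
    apply Finset.filter_congr
    intro k _
    simp [Finset.not_nonempty_iff_eq_empty]
  rw [heq] at hsplit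
  omega

lemma exists_empty_clone (hu : I.UnderSub (projM M') h) :
    ∃ k < I.cap h, assignees M' (h, k) = ∅ := by
  have := I.empty_clones_card (M' := M') h
  unfold UnderSub at hu
  have hpos : 0 < ((Finset.range (I.cap h)).filter fun k => assignees M' (h, k) = ∅).card := by
    omega
  obtain ⟨k, hk⟩ := Finset.card_pos.1 hpos
  rw [Finset.mem_filter, Finset.mem_range] at hk
  exact ⟨k, hk.1, hk.2⟩

lemma exists_two_empty_clones
    (hcard : (assignees (projM M') h).card + 2 ≤ I.cap h) :
    ∃ k < I.cap h, ∃ k' < I.cap h, k ≠ k' ∧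
      assignees M' (h, k) = ∅ ∧ assignees M' (h, k') = ∅ := by
  have := I.empty_clones_card (M' := M') h
  have hpos : 1 < ((Finset.range (I.cap h)).filter fun k => assignees M' (h, k) = ∅).card := by
    omega
  obtain ⟨k, hk, k', hk', hne⟩ := Finset.one_lt_card.1 hpos
  rw [Finset.mem_filter, Finset.mem_range] at hk hk'
  exact ⟨k, hk.1, k', hk'.1, hne, hk.2, hk'.2⟩

lemma cloneM_isSome {r : R} : (I.cloneM M r).isSome = (M r).isSome := by
  unfold cloneM; cases M r <;> rfl

lemma projM_isSome {r : R} : (projM M' r).isSome = (M' r).isSome := by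
  unfold projM; cases M' r <;> rfl

lemma cloneM_isMatching (hwf : I.WellFormed) (hM : I.IsMatching M) :
    I.cloned.IsMatching (I.cloneM M) := by
  refine ⟨?_, ?_, ?_, ?_⟩
  · intro r hr p hp
    obtain ⟨h, k⟩ := p
    obtain ⟨hMr, hrk⟩ := I.cloneM_some_iff.1 hp
    refine I.mem_singlePref_cloned.2 ⟨hM.1 r hr h hMr, ?_⟩
    show k < I.cap h
    subst hrk
    exact lt_of_lt_of_le (I.rk_lt_card (mem_assignees.2 hMr)) (hM.2.2.1 h)
  · intro c hc
    rcases hM.2.1 c hc with ⟨h1, h2⟩ | ⟨hp, hmem, h1, h2⟩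
    · left; exact ⟨I.cloneM_none_iff.2 h1, I.cloneM_none_iff.2 h2⟩
    · right
      refine ⟨((hp.1, I.rk M hp.1 c.1), (hp.2, I.rk M hp.2 c.2)), ?_, ?_, ?_⟩
      · apply I.mem_couplePref_cloned.2
        refine ⟨hmem, ?_, ?_, ?_⟩
        · exact lt_of_lt_of_le (I.rk_lt_card (mem_assignees.2 h1)) (hM.2.2.1 hp.1)
        · exact lt_of_lt_of_le (I.rk_lt_card (mem_assignees.2 h2)) (hM.2.2.1 hp.2)
        · intro heq hkk
          simp only at heq hkk
          apply hwf.2.2.2.2.2.2.1 c hc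
          refine I.rk_inj hwf hM (mem_assignees.2 h1) (mem_assignees.2 ?_) ?_
          · rw [h2, heq]
          · rw [hkk, heq]
      · exact I.cloneM_some_iff.2 ⟨h1, rfl⟩
      · exact I.cloneM_some_iff.2 ⟨h2, rfl⟩
  · intro p
    obtain ⟨h, k⟩ := p
    exact I.card_assignees_cloneM_le_one hwf hM
  · intro r hsome
    rw [cloneM_isSome] at hsome
    exact hM.2.2.2 r hsome

lemma projM_isMatching (hM' : I.cloned.IsMatching M') : I.IsMatching (projM M') := by
  refine ⟨?_, ?_, ?_, ?_⟩
  · intro r hr h hMr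
    obtain ⟨k, hk⟩ := projM_some_iff.1 hMr
    exact (I.mem_singlePref_cloned.1 (hM'.1 r hr (h, k) hk)).1
  · intro c hc
    rcases hM'.2.1 c hc with ⟨h1, h2⟩ | ⟨hp, hmem, h1, h2⟩
    · left; exact ⟨projM_none_iff.2 h1, projM_none_iff.2 h2⟩
    · right
      exact ⟨(hp.1.1, hp.2.1), (I.mem_couplePref_cloned.1 hmem).1,
        by unfold projM; rw [h1]; rfl, by unfold projM; rw [h2]; rfl⟩
  · exact I.card_assignees_projM_le hM'
  · intro r hsome
    rw [projM_isSome] at hsome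
    exact hM'.2.2.2 r hsome

lemma assignees_cloneM_subset {h : H} {k : ℕ} :
    assignees (I.cloneM M) (h, k) ⊆ assignees M h := by
  rw [assignees_cloneM]; exact Finset.filter_subset _ _

lemma clone_cond_to_cond (hwf : I.WellFormed) (hM : I.IsMatching M) {h : H} {k : ℕ} {rr : R}
    (hk : k < I.cap h)
    (hcond : I.cloned.UnderSub (I.cloneM M) (h, k) ∨
      ∃ r' ∈ assignees (I.cloneM M) (h, k), I.HPrefers h rr r') :
    I.UnderSub M h ∨ ∃ r' ∈ assignees M h, I.HPrefers h rr r' := by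
  rcases hcond with hu | ⟨r', hr', hpref⟩
  · exact Or.inl (I.undersub_of_cloneM_empty hwf hM hk (I.undersub_cloned_iff.1 hu))
  · exact Or.inr ⟨r', I.assignees_cloneM_subset hr', hpref⟩

lemma clone_cond_to_cond_erase (hwf : I.WellFormed) (hM : I.IsMatching M)
    {h : H} {k : ℕ} {rr rexc : R} (hk : k < I.cap h)
    (hcond : I.cloned.UnderSub (I.cloneM M) (h, k) ∨
      ∃ r' ∈ (assignees (I.cloneM M) (h, k)).erase rexc, I.HPrefers h rr r') :
    I.UnderSub M h ∨ ∃ r' ∈ (assignees M h).erase rexc, I.HPrefers h rr r' := by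
  rcases hcond with hu | ⟨r', hr', hpref⟩
  · exact Or.inl (I.undersub_of_cloneM_empty hwf hM hk (I.undersub_cloned_iff.1 hu))
  · rw [Finset.mem_erase] at hr'
    exact Or.inr ⟨r', Finset.mem_erase.2 ⟨hr'.1, I.assignees_cloneM_subset hr'.2⟩, hpref⟩

lemma cond_to_clone_cond (hM' : I.cloned.IsMatching M') {h : H} {rr : R}
    (hcond : I.UnderSub (projM M') h ∨ ∃ r' ∈ assignees (projM M') h, I.HPrefers h rr r') :
    ∃ k < I.cap h, (assignees M' (h, k) = ∅ ∨
      ∃ r' ∈ assignees M' (h, k), I.HPrefers h rr r') := by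
  rcases hcond with hu | ⟨r', hr', hpref⟩
  · obtain ⟨k, hk, hemp⟩ := I.exists_empty_clone hu
    exact ⟨k, hk, Or.inl hemp⟩
  · obtain ⟨k, hk⟩ := mem_assignees_projM.1 hr'
    exact ⟨k, I.clone_lt_cap hM' hk, Or.inr ⟨r', mem_assignees.2 hk, hpref⟩⟩

lemma clone_pair_ne {c : R × R} {p : (H × ℕ) × (H × ℕ)}
    (hp : p ∈ I.cloned.couplePref c) : p.1 ≠ p.2 := by
  obtain ⟨hm, h1, h2, hne⟩ := I.mem_couplePref_cloned.1 hp
  intro heq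
  exact hne (by rw [heq]) (by rw [heq])

lemma cloneM_no_block1 (hwf : I.WellFormed) (hM : I.IsMatching M)
    (hb1 : ¬ I.MMBlock1 M) : ¬ I.cloned.MMBlock1 (I.cloneM M) := by
  intro hblk
  obtain ⟨r, hr, p, hp, hchoice, hcond⟩ := hblk
  obtain ⟨h, k⟩ := p
  obtain ⟨hmem, hk⟩ := I.mem_singlePref_cloned.1 hp
  rcases hchoice with hnone | ⟨p', hps, hpref⟩
  · exact hb1 ⟨r, hr, h, hmem, Or.inl (I.cloneM_none_iff.1 hnone),
      I.clone_cond_to_cond hwf hM hk hcond⟩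
  · obtain ⟨h', k'⟩ := p'
    obtain ⟨hMr, hrk⟩ := I.cloneM_some_iff.1 hps
    rcases (I.prefers_single_cloned_cases hpref).2.2.2.2 with hcase | ⟨heq, hlt⟩
    · exact hb1 ⟨r, hr, h, hmem, Or.inr ⟨h', hMr, hcase⟩,
        I.clone_cond_to_cond hwf hM hk hcond⟩
    · simp only at heq hlt
      subst heq
      have hrmem : r ∈ assignees M h := mem_assignees.2 hMr
      rcases hcond with hu | ⟨r', hr', hpref'⟩
      · have hne := (I.cloneM_nonempty_iff hwf hM (h := h) (k := k)).2
          (by have := I.rk_lt_card hrmem; omega)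
        rw [undersub_cloned_iff] at hu
        rw [hu] at hne
        exact absurd hne.choose_spec (Finset.notMem_empty _)
      · have hocc := I.occupant_pref hwf hM hr' hrmem (by omega)
        have : Prefers (I.hospPref h) r r' := hpref'
        have := this.2.2
        omega

lemma cloneM_no_block2 (hwf : I.WellFormed) (hM : I.IsMatching M)
    (hb2 : ¬ I.MMBlock2 M) : ¬ I.cloned.MMBlock2 (I.cloneM M) := by
  intro hblk
  obtain ⟨c, hc, pi, pj, hci, hcj, pk, hdisj⟩ := hblk
  obtain ⟨hi, ki⟩ := pi; obtain ⟨hj, kj⟩ := pj; obtain ⟨g, κ⟩ := pk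
  obtain ⟨hMc1, hrk1⟩ := I.cloneM_some_iff.1 hci
  obtain ⟨hMc2, hrk2⟩ := I.cloneM_some_iff.1 hcj
  have hmem1 : c.1 ∈ assignees M hi := mem_assignees.2 hMc1
  have hmem2 : c.2 ∈ assignees M hj := mem_assignees.2 hMc2
  rcases hdisj with ⟨hpref, hcond⟩ | ⟨hpref, hcond⟩
  · obtain ⟨hmp, hmq, hcases⟩ := I.prefers_couple_cloned_cases hpref
    have hκ : κ < I.cap g := (I.mem_couplePref_cloned.1 hmp).2.1
    rcases hcases with hcase | ⟨heq, hklex⟩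
    · exact hb2 ⟨c, hc, hi, hj, hMc1, hMc2, g, Or.inl ⟨hcase,
        I.clone_cond_to_cond_erase hwf hM hκ hcond⟩⟩
    · have hg : g = hi := congrArg Prod.fst heq
      subst hg
      have hκki : κ < ki := by
        rcases hklex with h' | ⟨_, h'⟩
        · exact absurd h' (by simp)
        · exact h'
      rcases hcond with hu | ⟨r', hr', hpref'⟩
      · have hne := (I.cloneM_nonempty_iff hwf hM (h := g) (k := κ)).2
          (by have := I.rk_lt_card hmem1; omega)
        rw [undersub_cloned_iff] at hu
        rw [hu] at hne
        exact absurd hne.choose_spec (Finset.notMem_empty _)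
      · have hocc := I.occupant_pref hwf hM (Finset.mem_erase.1 hr').2 hmem1 (by omega)
        have : Prefers (I.hospPref g) c.1 r' := hpref'
        have := this.2.2
        omega
  · obtain ⟨hmp, hmq, hcases⟩ := I.prefers_couple_cloned_cases hpref
    have hκ : κ < I.cap g := (I.mem_couplePref_cloned.1 hmp).2.2.1
    rcases hcases with hcase | ⟨heq, hklex⟩
    · exact hb2 ⟨c, hc, hi, hj, hMc1, hMc2, g, Or.inr ⟨hcase,
        I.clone_cond_to_cond_erase hwf hM hκ hcond⟩⟩
    · have hg : g = hj := congrArg Prod.snd heq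
      subst hg
      have hκkj : κ < kj := by
        rcases hklex with h' | ⟨_, h'⟩
        · exact h'
        · simp only at h'; omega
      rcases hcond with hu | ⟨r', hr', hpref'⟩
      · have hne := (I.cloneM_nonempty_iff hwf hM (h := g) (k := κ)).2
          (by have := I.rk_lt_card hmem2; omega)
        rw [undersub_cloned_iff] at hu
        rw [hu] at hne
        exact absurd hne.choose_spec (Finset.notMem_empty _)
      · have hocc := I.occupant_pref hwf hM (Finset.mem_erase.1 hr').2 hmem2 (by omega)
        have : Prefers (I.hospPref g) c.2 r' := hpref'
        have := this.2.2
        omega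

lemma assemble_I_cond3 (hwf : I.WellFormed) (hM : I.IsMatching M) {g g' : H} {κ lam : ℕ}
    {c : R × R} (hκ : κ < I.cap g) (hlam : lam < I.cap g')
    (hne : ((g, κ) : H × ℕ) ≠ (g', lam))
    (hcondk : I.cloned.UnderSub (I.cloneM M) (g, κ) ∨
      ∃ r' ∈ assignees (I.cloneM M) (g, κ), I.HPrefers g c.1 r')
    (hcondl : I.cloned.UnderSub (I.cloneM M) (g', lam) ∨
      ∃ r' ∈ assignees (I.cloneM M) (g', lam), I.HPrefers g' c.2 r') :
    ((g ≠ g' ∧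
        (I.UnderSub M g ∨ ∃ r' ∈ assignees M g, I.HPrefers g c.1 r') ∧
        (I.UnderSub M g' ∨ ∃ r' ∈ assignees M g', I.HPrefers g' c.2 r')) ∨
     (g = g' ∧ (assignees M g).card + 2 ≤ I.cap g) ∨
     (g = g' ∧ (assignees M g).card + 1 = I.cap g ∧
        ∃ r' ∈ assignees M g, (I.HPrefers g c.1 r' ∨ I.HPrefers g c.2 r')) ∨
     (g = g' ∧ (assignees M g).card = I.cap g ∧
        ∃ rs ∈ assignees M g, ∃ rt ∈ assignees M g, rs ≠ rt ∧
          I.HPrefers g c.1 rs ∧ I.HPrefers g c.2 rt)) := by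
  by_cases hgg : g = g'
  · subst hgg
    have hkne : κ ≠ lam := fun h => hne (by rw [h])
    have hcap := hM.2.2.1 g
    have hemp : ∀ k, I.cloned.UnderSub (I.cloneM M) (g, k) → ¬ k < (assignees M g).card := by
      intro k hu hlt
      obtain ⟨r, hr⟩ := (I.cloneM_nonempty_iff hwf hM).2 hlt
      rw [undersub_cloned_iff] at hu; rw [hu] at hr; exact Finset.notMem_empty _ hr
    have hocc : ∀ k r', r' ∈ assignees (I.cloneM M) (g, k) → k < (assignees M g).card := by
      intro k r' hr'
      exact (I.cloneM_nonempty_iff hwf hM).1 ⟨r', hr'⟩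
    rcases hcondk with hu1 | ⟨r1, hr1, hp1⟩ <;> rcases hcondl with hu2 | ⟨r2, hr2, hp2⟩
    · have h1 := hemp κ hu1; have h2 := hemp lam hu2
      exact Or.inr (Or.inl ⟨rfl, by omega⟩)
    · have hκn := hemp κ hu1
      by_cases hc2 : (assignees M g).card + 2 ≤ I.cap g
      · exact Or.inr (Or.inl ⟨rfl, hc2⟩)
      · exact Or.inr (Or.inr (Or.inl ⟨rfl, by omega, r2,
          I.assignees_cloneM_subset hr2, Or.inr hp2⟩))
    · have hlamn := hemp lam hu2
      by_cases hc2 : (assignees M g).card + 2 ≤ I.cap g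
      · exact Or.inr (Or.inl ⟨rfl, hc2⟩)
      · exact Or.inr (Or.inr (Or.inl ⟨rfl, by omega, r1,
          I.assignees_cloneM_subset hr1, Or.inl hp1⟩))
    · have hrne : r1 ≠ r2 := by
        intro h; subst h
        rw [assignees_cloneM, Finset.mem_filter] at hr1 hr2
        exact hkne (hr1.2.symm.trans hr2.2)
      by_cases hc2 : (assignees M g).card + 2 ≤ I.cap g
      · exact Or.inr (Or.inl ⟨rfl, hc2⟩)
      · by_cases hc1 : (assignees M g).card + 1 = I.cap g
        · exact Or.inr (Or.inr (Or.inl ⟨rfl, hc1, r1,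
            I.assignees_cloneM_subset hr1, Or.inl hp1⟩))
        · exact Or.inr (Or.inr (Or.inr ⟨rfl, by omega, r1,
            I.assignees_cloneM_subset hr1, r2, I.assignees_cloneM_subset hr2,
            hrne, hp1, hp2⟩))
  · exact Or.inl ⟨hgg, I.clone_cond_to_cond hwf hM hκ hcondk,
      I.clone_cond_to_cond hwf hM hlam hcondl⟩

lemma cloneM_no_block3 (hwf : I.WellFormed) (hM : I.IsMatching M)
    (hb2 : ¬ I.MMBlock2 M) (hb3 : ¬ I.MMBlock3 M) :
    ¬ I.cloned.MMBlock3 (I.cloneM M) := by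
  intro hblk
  obtain ⟨c, hc, pk, pl, hg1, hg2, ⟨hmemc, hprefpart⟩, hdisj⟩ := hblk
  obtain ⟨g, κ⟩ := pk; obtain ⟨g', lam⟩ := pl
  have hmems := I.mem_couplePref_cloned.1 hmemc
  have hκ : κ < I.cap g := hmems.2.1
  have hlam : lam < I.cap g' := hmems.2.2.1
  have hpkpl : ((g, κ) : H × ℕ) ≠ (g', lam) := I.clone_pair_ne hmemc
  obtain ⟨hcondk, hcondl⟩ :
      (I.cloned.UnderSub (I.cloneM M) (g, κ) ∨
        ∃ r' ∈ assignees (I.cloneM M) (g, κ), I.HPrefers g c.1 r') ∧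
      (I.cloned.UnderSub (I.cloneM M) (g', lam) ∨
        ∃ r' ∈ assignees (I.cloneM M) (g', lam), I.HPrefers g' c.2 r') := by
    rcases hdisj with ⟨_, h1, h2⟩ | ⟨heq, _⟩ | ⟨heq, _, _⟩ | ⟨heq, _, _⟩
    · exact ⟨h1, h2⟩
    all_goals exact absurd heq hpkpl
  rcases hprefpart with ⟨hn1, hn2⟩ | ⟨hp', hmemp', hcp1, hcp2, hprefc⟩
  · apply hb3
    refine ⟨c, hc, g, g', ?_, ?_,
      ⟨hmems.1, Or.inl ⟨I.cloneM_none_iff.1 hn1, I.cloneM_none_iff.1 hn2⟩⟩,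
      I.assemble_I_cond3 hwf hM hκ hlam hpkpl hcondk hcondl⟩
    · rw [I.cloneM_none_iff.1 hn1]; simp
    · rw [I.cloneM_none_iff.1 hn2]; simp
  · obtain ⟨⟨hi, ki⟩, ⟨hj, kj⟩⟩ := hp'
    obtain ⟨hMc1, hrk1⟩ := I.cloneM_some_iff.1 hcp1
    obtain ⟨hMc2, hrk2⟩ := I.cloneM_some_iff.1 hcp2
    have hmem1 : c.1 ∈ assignees M hi := mem_assignees.2 hMc1
    have hmem2 : c.2 ∈ assignees M hj := mem_assignees.2 hMc2
    obtain ⟨_, _, hcases⟩ := I.prefers_couple_cloned_cases hprefc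
    rcases hcases with hcase | ⟨heq, hklex⟩
    · -- strictly better original pair (g,g') over (hi,hj)
      by_cases hgi : hi = g
      · -- use MMBlock2, second disjunct, with hk := g'
        apply hb2
        refine ⟨c, hc, hi, hj, hMc1, hMc2, g', Or.inr ⟨?_, ?_⟩⟩
        · have hcase' : Prefers (I.couplePref c) (g, g') (hi, hj) := hcase
          rw [← hgi] at hcase'
          exact hcase'
        · rcases hcondl with hu | ⟨r', hr', hp2⟩
          · exact Or.inl (I.undersub_of_cloneM_empty hwf hM hlam (I.undersub_cloned_iff.1 hu))
          · by_cases hrc1 : r' = c.1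
            · have hceq : I.cloneM M c.1 = some (g', lam) := by
                rw [← hrc1]; exact mem_assignees.1 hr'
              have heq2 := hcp1.symm.trans hceq
              injection heq2 with heq2
              have hg'eq : hi = g' := congrArg Prod.fst heq2
              have hgg' : g = g' := hgi.symm.trans hg'eq
              have hκki : κ ≠ ki := by
                intro h
                apply hg1
                rw [hcp1, ← h, ← hgi]
              rcases hcondk with hu | ⟨r'', hr'', hp1⟩
              · left
                have hus := I.undersub_of_cloneM_empty hwf hM hκ (I.undersub_cloned_iff.1 hu)
                rw [← hgg']
                exact hus
              · have hrne : r'' ≠ c.1 := by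
                  intro h
                  apply hκki
                  have h3 := mem_assignees.1 hr''
                  rw [h, hcp1] at h3
                  injection h3 with h3
                  exact (congrArg Prod.snd h3).symm
                have hp1' : I.HPrefers g c.1 r'' := hp1
                have hp2' : I.HPrefers g' c.2 c.1 := by rw [← hrc1]; exact hp2
                rw [← hgg'] at hp2'
                have htr : I.HPrefers g c.2 r'' := prefers_trans hp2' hp1'
                refine Or.inr ⟨r'', Finset.mem_erase.2 ⟨hrne, ?_⟩, ?_⟩
                · rw [← hgg']
                  exact I.assignees_cloneM_subset hr''
                · rw [← hgg']
                  exact htr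
            · exact Or.inr ⟨r', Finset.mem_erase.2 ⟨hrc1, I.assignees_cloneM_subset hr'⟩, hp2⟩
      · by_cases hgj : hj = g'
        · -- use MMBlock2, first disjunct, with hk := g
          apply hb2
          refine ⟨c, hc, hi, hj, hMc1, hMc2, g, Or.inl ⟨?_, ?_⟩⟩
          · have hcase' : Prefers (I.couplePref c) (g, g') (hi, hj) := hcase
            rw [← hgj] at hcase'
            exact hcase'
          · rcases hcondk with hu | ⟨r', hr', hp1⟩
            · exact Or.inl (I.undersub_of_cloneM_empty hwf hM hκ (I.undersub_cloned_iff.1 hu))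
            · by_cases hrc2 : r' = c.2
              · have hceq : I.cloneM M c.2 = some (g, κ) := by
                  rw [← hrc2]; exact mem_assignees.1 hr'
                have heq2 := hcp2.symm.trans hceq
                injection heq2 with heq2
                have hgeq : hj = g := congrArg Prod.fst heq2
                have hgg' : g = g' := hgeq ▸ hgj
                have hlamkj : lam ≠ kj := by
                  intro h
                  apply hg2
                  rw [hcp2, ← h, ← hgj]
                rcases hcondl with hu | ⟨r'', hr'', hp2⟩
                · left
                  have hus := I.undersub_of_cloneM_empty hwf hM hlam (I.undersub_cloned_iff.1 hu)
                  rw [hgg']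
                  exact hus
                · have hrne : r'' ≠ c.2 := by
                    intro h
                    apply hlamkj
                    have h3 := mem_assignees.1 hr''
                    rw [h, hcp2] at h3
                    injection h3 with h3
                    exact (congrArg Prod.snd h3).symm
                  have hp2' : I.HPrefers g' c.2 r'' := hp2
                  have hp1' : I.HPrefers g c.1 c.2 := by rw [← hrc2]; exact hp1
                  rw [hgg'] at hp1'
                  have htr : I.HPrefers g' c.1 r'' := prefers_trans hp1' hp2'
                  refine Or.inr ⟨r'', Finset.mem_erase.2 ⟨hrne, ?_⟩, ?_⟩
                  · rw [hgg']
                    exact I.assignees_cloneM_subset hr''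
                  · rw [hgg']
                    exact htr
              · exact Or.inr ⟨r', Finset.mem_erase.2 ⟨hrc2, I.assignees_cloneM_subset hr'⟩, hp1⟩
        · apply hb3
          refine ⟨c, hc, g, g', ?_, ?_,
            ⟨hmems.1, Or.inr ⟨(hi, hj), hcase.2.1, hMc1, hMc2, hcase⟩⟩,
            I.assemble_I_cond3 hwf hM hκ hlam hpkpl hcondk hcondl⟩
          · rw [hMc1]
            intro hcon
            exact hgi (by injection hcon)
          · rw [hMc2]
            intro hcon
            exact hgj (by injection hcon)
    · -- same original pair: derive a contradiction
      have hgj' : g' = hj := congrArg Prod.snd heq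
      subst hgj'
      have hlamkj : lam ≠ kj := by
        intro h; subst h
        exact hg2 (by rw [hcp2])
      have hlamlt : lam < kj := by
        rcases hklex with h' | ⟨h', _⟩
        · exact h'
        · simp only at h'; omega
      rcases hcondl with hu | ⟨r', hr', hp2⟩
      · have hne := (I.cloneM_nonempty_iff hwf hM (h := g') (k := lam)).2
          (by have := I.rk_lt_card hmem2; omega)
        rw [undersub_cloned_iff] at hu
        rw [hu] at hne
        exact absurd hne.choose_spec (Finset.notMem_empty _)
      · have hoccp := I.occupant_pref hwf hM hr' hmem2 (by omega)
        have := hp2.2.2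
        omega

lemma clone_occupant_unique (hM' : I.cloned.IsMatching M') {p : H × ℕ} {r r' : R}
    (h1 : r ∈ assignees M' p) (h2 : r' ∈ assignees M' p) : r = r' :=
  Finset.card_le_one.1 (hM'.2.2.1 p) r h1 r' h2

lemma cond_to_clone_cond_erase (hM' : I.cloned.IsMatching M') {h : H} {rr rexc : R}
    (hcond : I.UnderSub (projM M') h ∨
      ∃ r' ∈ (assignees (projM M') h).erase rexc, I.HPrefers h rr r') :
    ∃ k < I.cap h, (assignees M' (h, k) = ∅ ∨
      ∃ r' ∈ (assignees M' (h, k)).erase rexc, I.HPrefers h rr r') := by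
  rcases hcond with hu | ⟨r', hr', hpref⟩
  · obtain ⟨k, hk, hemp⟩ := I.exists_empty_clone hu
    exact ⟨k, hk, Or.inl hemp⟩
  · obtain ⟨hrne, hrm⟩ := Finset.mem_erase.1 hr'
    obtain ⟨k, hk⟩ := mem_assignees_projM.1 hrm
    exact ⟨k, I.clone_lt_cap hM' hk,
      Or.inr ⟨r', Finset.mem_erase.2 ⟨hrne, mem_assignees.2 hk⟩, hpref⟩⟩

lemma couple_assigned_cloned (hM' : I.cloned.IsMatching M') {c : R × R} (hc : c ∈ I.couples)
    {a b : H} {ka kb : ℕ} (h1 : M' c.1 = some (a, ka)) (h2 : M' c.2 = some (b, kb)) :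
    ((a, ka), (b, kb)) ∈ I.cloned.couplePref c := by
  rcases hM'.2.1 c hc with ⟨hn, _⟩ | ⟨hp, hmem, e1, e2⟩
  · rw [h1] at hn; cases hn
  · rw [e1] at h1; rw [e2] at h2
    injection h1 with h1; injection h2 with h2
    rw [← h1, ← h2]
    exact hmem

lemma projM_no_block1 (hM' : I.cloned.IsMatching M') (hb1 : ¬ I.cloned.MMBlock1 M') :
    ¬ I.MMBlock1 (projM M') := by
  intro hblk
  obtain ⟨r, hr, h, hmem, hchoice, hcond⟩ := hblk
  obtain ⟨k, hk, hcc⟩ := I.cond_to_clone_cond hM' hcond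
  apply hb1
  refine ⟨r, hr, (h, k), I.mem_singlePref_cloned.2 ⟨hmem, hk⟩, ?_, ?_⟩
  · rcases hchoice with hnone | ⟨h', hsome, hpref⟩
    · exact Or.inl (projM_none_iff.1 hnone)
    · obtain ⟨k', hk'⟩ := projM_some_iff.1 hsome
      exact Or.inr ⟨(h', k'), hk',
        I.prefers_single_cloned_of_prefers hk (I.clone_lt_cap hM' hk') hpref⟩
  · rcases hcc with hemp | hocc
    · exact Or.inl (I.undersub_cloned_iff.2 hemp)
    · exact Or.inr hocc

lemma projM_no_block2 (hM' : I.cloned.IsMatching M') (hb2 : ¬ I.cloned.MMBlock2 M') :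
    ¬ I.MMBlock2 (projM M') := by
  intro hblk
  obtain ⟨c, hc, hi, hj, h1, h2, g, hdisj⟩ := hblk
  obtain ⟨ki, hki⟩ := projM_some_iff.1 h1
  obtain ⟨kj, hkj⟩ := projM_some_iff.1 h2
  have hpair := I.couple_assigned_cloned hM' hc hki hkj
  apply hb2
  rcases hdisj with ⟨hpref, hcond⟩ | ⟨hpref, hcond⟩
  · obtain ⟨k, hk, hcc⟩ := I.cond_to_clone_cond_erase hM' (rexc := c.2) hcond
    have hknkj : g = hj → k ≠ kj := by
      intro hghj hkkj
      have h4 : M' c.2 = some (g, k) := by rw [hkj, hghj, hkkj]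
      rcases hcc with hemp | ⟨r', hr', _⟩
      · have : c.2 ∈ assignees M' (g, k) := mem_assignees.2 h4
        rw [hemp] at this; exact Finset.notMem_empty _ this
      · have hm1 := Finset.mem_erase.1 hr'
        exact hm1.1 (I.clone_occupant_unique hM' hm1.2 (mem_assignees.2 h4))
    have hmemnew : ((g, k), (hj, kj)) ∈ I.cloned.couplePref c :=
      I.mem_couplePref_cloned.2 ⟨hpref.1, hk, I.clone_lt_cap hM' hkj, hknkj⟩
    refine ⟨c, hc, (hi, ki), (hj, kj), hki, hkj, (g, k), Or.inl ⟨?_, ?_⟩⟩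
    · exact I.prefers_couple_cloned_of_prefers hmemnew hpair hpref
    · rcases hcc with hemp | hocc
      · exact Or.inl (I.undersub_cloned_iff.2 hemp)
      · exact Or.inr hocc
  · obtain ⟨k, hk, hcc⟩ := I.cond_to_clone_cond_erase hM' (rexc := c.1) hcond
    have hknki : hi = g → ki ≠ k := by
      intro hhig hkik
      have h4 : M' c.1 = some (g, k) := by rw [hki, hhig, hkik]
      rcases hcc with hemp | ⟨r', hr', _⟩
      · have : c.1 ∈ assignees M' (g, k) := mem_assignees.2 h4
        rw [hemp] at this; exact Finset.notMem_empty _ this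
      · have hm1 := Finset.mem_erase.1 hr'
        exact hm1.1 (I.clone_occupant_unique hM' hm1.2 (mem_assignees.2 h4))
    have hmemnew : ((hi, ki), (g, k)) ∈ I.cloned.couplePref c :=
      I.mem_couplePref_cloned.2 ⟨hpref.1, I.clone_lt_cap hM' hki, hk, hknki⟩
    refine ⟨c, hc, (hi, ki), (hj, kj), hki, hkj, (g, k), Or.inr ⟨?_, ?_⟩⟩
    · exact I.prefers_couple_cloned_of_prefers hmemnew hpair hpref
    · rcases hcc with hemp | hocc
      · exact Or.inl (I.undersub_cloned_iff.2 hemp)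
      · exact Or.inr hocc

lemma projM_no_block3 (hM' : I.cloned.IsMatching M') (hb3 : ¬ I.cloned.MMBlock3 M') :
    ¬ I.MMBlock3 (projM M') := by
  intro hblk
  obtain ⟨c, hc, g, g', hne1, hne2, ⟨hmem, hprefpart⟩, hdisj⟩ := hblk
  apply hb3
  have hguard1 : ∀ k : ℕ, M' c.1 ≠ some (g, k) := by
    intro k hcon
    exact hne1 (projM_some_iff.2 ⟨k, hcon⟩)
  have hguard2 : ∀ k : ℕ, M' c.2 ≠ some (g', k) := by
    intro k hcon
    exact hne2 (projM_some_iff.2 ⟨k, hcon⟩)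
  have hwants : ∀ pp : (H × ℕ) × (H × ℕ), pp ∈ I.cloned.couplePref c →
      (pp.1.1, pp.2.1) = ((g : H), (g' : H)) → I.cloned.CoupleWants M' c pp := by
    intro pp hpp hproj
    refine ⟨hpp, ?_⟩
    rcases hprefpart with ⟨hn1, hn2⟩ | ⟨hp', hm', e1, e2, hpref⟩
    · exact Or.inl ⟨projM_none_iff.1 hn1, projM_none_iff.1 hn2⟩
    · obtain ⟨ka, hka⟩ := projM_some_iff.1 e1
      obtain ⟨kb, hkb⟩ := projM_some_iff.1 e2
      have hpaircl := I.couple_assigned_cloned hM' hc hka hkb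
      refine Or.inr ⟨((hp'.1, ka), (hp'.2, kb)), hpaircl, hka, hkb, ?_⟩
      refine I.prefers_couple_cloned_of_prefers hpp hpaircl ?_
      rw [hproj]
      exact hpref
  rcases hdisj with ⟨hgg, hcondk, hcondl⟩ | ⟨rfl, hcard⟩ |
      ⟨rfl, hcard, r', hr', hpd⟩ | ⟨rfl, hfull, rs, hrs, rt, hrt, hrsrt, hps, hpt⟩
  · obtain ⟨k, hk, hcck⟩ := I.cond_to_clone_cond hM' hcondk
    obtain ⟨l, hl, hccl⟩ := I.cond_to_clone_cond hM' hcondl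
    refine ⟨c, hc, (g, k), (g', l), hguard1 k, hguard2 l,
      hwants _ (I.mem_couplePref_cloned.2 ⟨hmem, hk, hl, fun hcon => absurd hcon hgg⟩) rfl,
      Or.inl ⟨fun hcon => hgg (congrArg Prod.fst hcon), ?_, ?_⟩⟩
    · rcases hcck with hemp | hocc
      · exact Or.inl (I.undersub_cloned_iff.2 hemp)
      · exact Or.inr hocc
    · rcases hccl with hemp | hocc
      · exact Or.inl (I.undersub_cloned_iff.2 hemp)
      · exact Or.inr hocc
  · obtain ⟨k, hk, k', hk', hkk', hemp, hemp'⟩ := I.exists_two_empty_clones hcard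
    refine ⟨c, hc, (g, k), (g, k'), hguard1 k, hguard2 k',
      hwants _ (I.mem_couplePref_cloned.2 ⟨hmem, hk, hk', fun _ => hkk'⟩) rfl,
      Or.inl ⟨fun hcon => hkk' (congrArg Prod.snd hcon),
        Or.inl (I.undersub_cloned_iff.2 hemp), Or.inl (I.undersub_cloned_iff.2 hemp')⟩⟩
  · obtain ⟨k0, hk0, hemp0⟩ := I.exists_empty_clone (M' := M') (show I.UnderSub (projM M') g by unfold UnderSub; omega)
    obtain ⟨κ, hκc⟩ := mem_assignees_projM.1 hr'
    have hκ : κ < I.cap g := I.clone_lt_cap hM' hκc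
    have hκk0 : κ ≠ k0 := by
      intro hcon
      have : r' ∈ assignees M' (g, k0) := mem_assignees.2 (hcon ▸ hκc)
      rw [hemp0] at this; exact Finset.notMem_empty _ this
    rcases hpd with hp1 | hp2
    · refine ⟨c, hc, (g, κ), (g, k0), hguard1 κ, hguard2 k0,
        hwants _ (I.mem_couplePref_cloned.2 ⟨hmem, hκ, hk0, fun _ => hκk0⟩) rfl,
        Or.inl ⟨fun hcon => hκk0 (congrArg Prod.snd hcon),
          Or.inr ⟨r', mem_assignees.2 hκc, hp1⟩,
          Or.inl (I.undersub_cloned_iff.2 hemp0)⟩⟩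
    · refine ⟨c, hc, (g, k0), (g, κ), hguard1 k0, hguard2 κ,
        hwants _ (I.mem_couplePref_cloned.2 ⟨hmem, hk0, hκ, fun _ => (Ne.symm hκk0)⟩) rfl,
        Or.inl ⟨fun hcon => hκk0 (congrArg Prod.snd hcon).symm,
          Or.inl (I.undersub_cloned_iff.2 hemp0),
          Or.inr ⟨r', mem_assignees.2 hκc, hp2⟩⟩⟩
  · obtain ⟨κs, hκsc⟩ := mem_assignees_projM.1 hrs
    obtain ⟨κt, hκtc⟩ := mem_assignees_projM.1 hrt
    have hκκ : κs ≠ κt := by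
      intro hcon
      exact hrsrt (I.clone_occupant_unique hM' (mem_assignees.2 hκsc)
        (mem_assignees.2 (hcon ▸ hκtc)))
    refine ⟨c, hc, (g, κs), (g, κt), hguard1 κs, hguard2 κt,
      hwants _ (I.mem_couplePref_cloned.2 ⟨hmem, I.clone_lt_cap hM' hκsc,
        I.clone_lt_cap hM' hκtc, fun _ => hκκ⟩) rfl,
      Or.inl ⟨fun hcon => hκκ (congrArg Prod.snd hcon),
        Or.inr ⟨rs, mem_assignees.2 hκsc, hps⟩,
        Or.inr ⟨rt, mem_assignees.2 hκtc, hpt⟩⟩⟩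
-- MORE
end HRCInst
end CloneLemmasTest

/-- `I` admits an MM-stable matching if and only if the cloned one-to-one instance
`I'` admits an MM-stable matching. -/
theorem mmStable_iff_cloned_mmStable {R H : Type}
    [Fintype R] [DecidableEq R] [DecidableEq H]
    (I : HRCInst R H) (hwf : I.WellFormed) :
    (∃ M : R → Option H, I.MMStable M) ↔
    (∃ M' : R → Option (H × ℕ), I.cloned.MMStable M') := by
  constructor
  · rintro ⟨M, hM, hb1, hb2, hb3⟩
    exact ⟨I.cloneM M, I.cloneM_isMatching hwf hM, I.cloneM_no_block1 hwf hM hb1,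
      I.cloneM_no_block2 hwf hM hb2, I.cloneM_no_block3 hwf hM hb2 hb3⟩
  · rintro ⟨M', hM', hb1, hb2, hb3⟩
    exact ⟨HRCInst.projM M', I.projM_isMatching hM', I.projM_no_block1 hM' hb1,
      I.projM_no_block2 hM' hb2, I.projM_no_block3 hM' hb3⟩
end
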